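/- arXiv:1011.0651 — 5 statements merged into one kernel-verified Lean document; each statement's English description precedes it below -/
import Mathlib

section
/- Let Λ_r = ℤ[e_1,…,e_r] be the ring of symmetric polynomials in r variables, with e_i the elementary symmetric polynomials and h_i the complete homogeneous symmetric polynomials. For a partition λ of length ≤ r with λ_1 > n−r (i.e. λ ∉ Π_{r,n−r}), the Schur polynomial s_λ lies in the ideal (h_{n−r+1},…,h_n) of Λ_r. -/
noncomputable section

open MvPolynomial
open Finset

/-- The `d`-th complete homogeneous symmetric polynomial in `r` variables over `ℤ`:
the sum of all monomials of degree `d`. -/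
def hpoly (r d : ℕ) : MvPolynomial (Fin r) ℤ :=
  ∑ f ∈ Finset.Nat.antidiagonalTuple r d,
    monomial (Finsupp.equivFunOnFinite.symm f) (1 : ℤ)

/-- `h` extended to integer indices, vanishing for negative indices. -/
def hz (r : ℕ) (j : ℤ) : MvPolynomial (Fin r) ℤ :=
  if 0 ≤ j then hpoly r j.toNat else 0

/-- The Schur polynomial, via the Jacobi–Trudi formula
`s_λ = det (h_{λ_i − i + j})_{1 ≤ i,j ≤ r}`. -/
def schur (r : ℕ) (l : Fin r → ℕ) : MvPolynomial (Fin r) ℤ :=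
  (Matrix.of fun i j : Fin r =>
    hz r ((l i : ℤ) - ((i : ℕ) : ℤ) + ((j : ℕ) : ℤ))).det

lemma coeff_hpoly (r d : ℕ) (μ : Fin r →₀ ℕ) :
    coeff μ (hpoly r d) = if (∑ i, μ i) = d then 1 else 0 := by
  rw [hpoly, coeff_sum]
  have h1 : ∀ f ∈ Finset.Nat.antidiagonalTuple r d,
      coeff μ (monomial (Finsupp.equivFunOnFinite.symm f) (1 : ℤ))
        = if f = Finsupp.equivFunOnFinite μ then 1 else 0 := by
    intro f _
    rw [coeff_monomial]
    congr 1
    simp only [eq_iff_iff]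
    constructor
    · intro h; simpa using congrArg Finsupp.equivFunOnFinite h
    · intro h; simpa using congrArg Finsupp.equivFunOnFinite.symm h
  rw [Finset.sum_congr rfl h1, Finset.sum_ite_eq' _ (Finsupp.equivFunOnFinite μ)]
  simp [Finset.Nat.mem_antidiagonalTuple, Finsupp.equivFunOnFinite]


lemma sum_mapDomain_equiv {r : ℕ} (e : Equiv.Perm (Fin r)) (ν : Fin r →₀ ℕ) :
    ∑ i, (Finsupp.mapDomain (⇑e) ν) i = ∑ i, ν i := by
  rw [← Equiv.sum_comp e (fun i => (Finsupp.mapDomain (⇑e) ν) i)]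
  exact Finset.sum_congr rfl fun i _ => by simp [Finsupp.mapDomain_equiv_apply]

lemma hpoly_isSymmetric (r d : ℕ) : (hpoly r d).IsSymmetric := by
  intro e
  ext μ
  have hμ : μ = Finsupp.mapDomain (⇑e) (Finsupp.mapDomain (⇑e.symm) μ) := by
    ext a; simp [Finsupp.mapDomain_equiv_apply]
  conv_lhs => rw [hμ, coeff_rename_mapDomain _ e.injective]
  rw [coeff_hpoly, coeff_hpoly]
  congr 1
  rw [eq_iff_iff]
  constructor <;> intro h
  · rw [← h]
    exact (sum_mapDomain_equiv e.symm μ).symm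
  · rw [← h]
    exact sum_mapDomain_equiv e.symm μ

lemma ind_apply {r : ℕ} (S : Finset (Fin r)) (a : Fin r) :
    (∑ j ∈ S, Finsupp.single j (1:ℕ)) a = if a ∈ S then 1 else 0 := by
  rw [Finset.sum_apply']
  simp [Finsupp.single_apply]

lemma ind_le_iff {r : ℕ} (S : Finset (Fin r)) (μ : Fin r →₀ ℕ) :
    (∑ j ∈ S, Finsupp.single j (1:ℕ)) ≤ μ ↔ S ⊆ μ.support := by
  rw [Finsupp.le_def]
  constructor
  · intro h a ha
    have := h a; rw [ind_apply, if_pos ha] at this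
    simp [Finsupp.mem_support_iff]; omega
  · intro h a
    rw [ind_apply]
    split
    · next ha => have := h ha; simp [Finsupp.mem_support_iff] at this; omega
    · exact Nat.zero_le _

lemma sum_ind {r : ℕ} (S : Finset (Fin r)) :
    ∑ a, (∑ j ∈ S, Finsupp.single j (1:ℕ)) a = S.card := by
  simp only [ind_apply]
  rw [Finset.sum_ite_mem]
  simp

lemma key (r m : ℕ) (hm : r < m) :
    ∑ i ∈ Finset.range (r+1), C ((-1:ℤ)^i) * (esymm (Fin r) ℤ i * hpoly r (m - i)) = 0 := by
  ext μ
  rw [coeff_sum, coeff_zero]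
  have hterm : ∀ i ∈ Finset.range (r+1),
      coeff μ (C ((-1:ℤ)^i) * (esymm (Fin r) ℤ i * hpoly r (m - i)))
        = ∑ S ∈ powersetCard i (univ : Finset (Fin r)),
            (if (∑ a, μ a) = m ∧ S ⊆ μ.support then (-1:ℤ)^S.card else 0) := by
    intro i hi
    rw [Finset.mem_range] at hi
    rw [esymm_eq_sum_monomial, Finset.sum_mul, Finset.mul_sum, coeff_sum]
    refine Finset.sum_congr rfl fun S hS => ?_
    rw [Finset.mem_powersetCard] at hS
    rw [coeff_C_mul, coeff_monomial_mul']
    by_cases hsub : S ⊆ μ.support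
    · have hle := (ind_le_iff S μ).2 hsub
      have hsum : ∑ a, (μ - (∑ j ∈ S, Finsupp.single j (1:ℕ))) a = (∑ a, μ a) - i := by
        simp only [Finsupp.coe_tsub, Pi.sub_apply]
        rw [Finset.sum_tsub_distrib Finset.univ (fun a _ => Finsupp.le_def.1 hle a), sum_ind, hS.2]
      have hige : i ≤ ∑ a, μ a := by
        calc i = S.card := hS.2.symm
        _ = ∑ _a ∈ S, 1 := by simp
        _ ≤ ∑ a ∈ S, μ a := Finset.sum_le_sum (fun a ha => by
            have := hsub ha; simp only [Finsupp.mem_support_iff] at this; omega)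
        _ ≤ ∑ a, μ a := Finset.sum_le_sum_of_subset (Finset.subset_univ S)
      rw [if_pos hle, coeff_hpoly, hsum]
      by_cases hd : (∑ a, μ a) = m
      · rw [if_pos (by omega), if_pos ⟨hd, hsub⟩, hS.2]; ring
      · rw [if_neg (by omega), if_neg (fun h => hd h.1)]; ring
    · rw [if_neg (fun h => hsub ((ind_le_iff S μ).1 h)),
        if_neg (fun h => hsub h.2), mul_zero]
  rw [Finset.sum_congr rfl hterm]
  have hps := Finset.sum_powerset (univ : Finset (Fin r))
    (fun S => if (∑ a, μ a) = m ∧ S ⊆ μ.support then (-1:ℤ)^S.card else 0)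
  have hcard : (univ : Finset (Fin r)).card = r := by simp
  rw [hcard] at hps
  rw [← hps]
  by_cases hμ : (∑ a, μ a) = m
  · have h2 : (∑ S ∈ (univ : Finset (Fin r)).powerset,
        (if (∑ a, μ a) = m ∧ S ⊆ μ.support then (-1:ℤ)^S.card else 0))
        = ∑ S ∈ μ.support.powerset, (-1:ℤ)^S.card := by
      rw [← Finset.sum_subset (Finset.powerset_mono.2 (Finset.subset_univ μ.support))
        (fun S _ hS => if_neg (fun h => hS (Finset.mem_powerset.2 h.2)))]
      exact Finset.sum_congr rfl fun S hS => if_pos ⟨hμ, Finset.mem_powerset.1 hS⟩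
    rw [h2, Finset.sum_powerset_neg_one_pow_card, if_neg]
    intro h
    rw [Finsupp.support_eq_empty.1 h] at hμ
    simp at hμ; omega
  · exact Finset.sum_eq_zero fun S _ => if_neg (fun h => hμ h.1)

def P (r n : ℕ) (q : MvPolynomial (Fin r) ℤ) : Prop :=
  ∃ g : ℕ → MvPolynomial (Fin r) ℤ, (∀ k, (g k).IsSymmetric) ∧
    q = ∑ k ∈ Finset.Icc (n - r + 1) n, g k * hpoly r k

lemma P_zero (r n : ℕ) : P r n 0 :=
  ⟨0, fun _ => (IsSymmetric.zero), by simp⟩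

lemma P_add {r n : ℕ} {p q} (hp : P r n p) (hq : P r n q) : P r n (p + q) := by
  obtain ⟨g, hg, rfl⟩ := hp
  obtain ⟨g', hg', rfl⟩ := hq
  exact ⟨g + g', fun k => (hg k).add (hg' k), by
    rw [← Finset.sum_add_distrib]
    exact Finset.sum_congr rfl fun k _ => by simp [add_mul]⟩

lemma P_mul {r n : ℕ} {c q} (hc : c.IsSymmetric) (hq : P r n q) : P r n (c * q) := by
  obtain ⟨g, hg, rfl⟩ := hq
  exact ⟨fun k => c * g k, fun k => hc.mul (hg k), by
    rw [Finset.mul_sum]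
    exact Finset.sum_congr rfl fun k _ => (mul_assoc c (g k) _).symm⟩

lemma P_neg {r n : ℕ} {q} (hq : P r n q) : P r n (-q) := by
  have : -q = C (-1 : ℤ) * q := by ring_nf; rw [map_neg, map_one]; ring
  rw [this]
  exact P_mul (fun e => by simp) hq

lemma P_sum {r n : ℕ} {α : Type*} (s : Finset α) (f : α → MvPolynomial (Fin r) ℤ)
    (h : ∀ x ∈ s, P r n (f x)) : P r n (∑ x ∈ s, f x) := by
  classical
  induction s using Finset.induction_on with
  | empty => simpa using P_zero r n
  | insert a s hx ih =>
    rw [Finset.sum_insert hx]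
    exact P_add (h _ (Finset.mem_insert_self _ _))
      (ih fun x hxs => h x (Finset.mem_insert_of_mem hxs))

lemma P_gen {r n k : ℕ} (hk : k ∈ Finset.Icc (n - r + 1) n) : P r n (hpoly r k) := by
  refine ⟨fun k' => if k' = k then 1 else 0, fun k' => ?_, ?_⟩
  · dsimp only
    split <;> [exact IsSymmetric.one; exact IsSymmetric.zero]
  · rw [Finset.sum_congr rfl (fun k' _ => ?_), Finset.sum_ite_eq' _ k, if_pos hk]
    split <;> simp_all

lemma C_isSymmetric {r : ℕ} (a : ℤ) : (C a : MvPolynomial (Fin r) ℤ).IsSymmetric :=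
  fun e => rename_C _ a

lemma P_hpoly {r n : ℕ} (hr : 0 < r) (hrn : r ≤ n) :
    ∀ m, n - r + 1 ≤ m → P r n (hpoly r m) := by
  intro m
  induction m using Nat.strong_induction_on with
  | _ m ih =>
    intro hm
    by_cases hmn : m ≤ n
    · exact P_gen (Finset.mem_Icc.2 ⟨hm, hmn⟩)
    · have hm' : n < m := by omega
      have hkey := key r m (by omega)
      rw [Finset.sum_range_succ'] at hkey
      simp only [esymm_zero, pow_zero, map_one, one_mul, Nat.sub_zero] at hkey
      have h2 : hpoly r m
          = -∑ i ∈ Finset.range r, C ((-1:ℤ)^(i+1)) * (esymm (Fin r) ℤ (i+1) * hpoly r (m-(i+1))) := by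
        linear_combination hkey
      rw [h2]
      refine P_neg (P_sum _ _ fun i hi => ?_)
      rw [Finset.mem_range] at hi
      rw [← mul_assoc]
      refine P_mul ((C_isSymmetric _).mul (esymm_isSymmetric _ _ _)) (ih _ (by omega) (by omega))

lemma det_isSymmetric {r k : ℕ} (M : Matrix (Fin k) (Fin k) (MvPolynomial (Fin r) ℤ))
    (h : ∀ i j, (M i j).IsSymmetric) : M.det.IsSymmetric := by
  intro e
  have h1 : (rename (⇑e)) M.det = ((rename (⇑e) : MvPolynomial (Fin r) ℤ →ₐ[ℤ] _).toRingHom.mapMatrix M).det :=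
    RingHom.map_det _ M
  rw [h1]
  have h2 : ((rename (⇑e) : MvPolynomial (Fin r) ℤ →ₐ[ℤ] _).toRingHom).mapMatrix M = M := by
    refine Matrix.ext fun i j => ?_
    simp only [RingHom.mapMatrix_apply, Matrix.map_apply, AlgHom.toRingHom_eq_coe,
      RingHom.coe_coe]
    exact h i j e
  rw [h2]

lemma hz_isSymmetric (r : ℕ) (j : ℤ) : (hz r j).IsSymmetric := by
  rw [hz]; split <;> [exact hpoly_isSymmetric _ _; exact IsSymmetric.zero]

/-- For a partition `λ` of length `≤ r` with `λ₁ > n − r`, the Schur polynomial `s_λ`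
lies in the ideal of `Λ_r` (the ring of symmetric polynomials) generated by
`h_{n−r+1}, …, h_n`; membership in the ideal of `Λ_r` is expressed by a representation
`s_λ = ∑ g_k h_k` with all coefficients `g_k` symmetric polynomials. -/
theorem stmt0 (r n : ℕ) (hr : 0 < r) (hrn : r ≤ n)
    (l : Fin r → ℕ) (hl : ∀ i j : Fin r, i ≤ j → l j ≤ l i)
    (hbig : n - r < l ⟨0, hr⟩) :
    ∃ g : ℕ → MvPolynomial (Fin r) ℤ,
      (∀ k, (g k).IsSymmetric) ∧
      schur r l = ∑ k ∈ Finset.Icc (n - r + 1) n, g k * hpoly r k := by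
  obtain ⟨r0, rfl⟩ : ∃ r0, r = r0 + 1 := ⟨r - 1, (Nat.succ_pred_eq_of_pos hr).symm⟩
  set A : Matrix (Fin (r0+1)) (Fin (r0+1)) (MvPolynomial (Fin (r0+1)) ℤ) :=
    Matrix.of fun i j : Fin (r0+1) =>
      hz (r0+1) ((l i : ℤ) - ((i : ℕ) : ℤ) + ((j : ℕ) : ℤ)) with hA
  have hbig0 : n - (r0+1) < l 0 := hbig
  have hA0 : ∀ j : Fin (r0+1), A 0 j = hpoly (r0+1) (l 0 + (j : ℕ)) := by
    intro j
    have hc : ((l 0 : ℤ) - (((0 : Fin (r0+1)) : ℕ) : ℤ) + ((j : ℕ) : ℤ))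
        = ((l 0 + (j : ℕ) : ℕ) : ℤ) := by push_cast [Fin.val_zero]; ring
    rw [hA, Matrix.of_apply, hc, hz, if_pos (by positivity), Int.toNat_natCast]
  have hdet : schur (r0+1) l
      = ∑ j : Fin (r0+1), (-1 : MvPolynomial (Fin (r0+1)) ℤ)^(j:ℕ) * A 0 j
          * (A.submatrix Fin.succ j.succAbove).det := by
    rw [schur, ← hA]
    exact Matrix.det_succ_row_zero A
  suffices h : P (r0+1) n (schur (r0+1) l) from h
  rw [hdet]
  refine P_sum _ _ fun j _ => ?_
  have hterm : (-1 : MvPolynomial (Fin (r0+1)) ℤ)^(j:ℕ) * A 0 j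
      * (A.submatrix Fin.succ j.succAbove).det
      = ((-1 : MvPolynomial (Fin (r0+1)) ℤ)^(j:ℕ)
          * (A.submatrix Fin.succ j.succAbove).det) * hpoly (r0+1) (l 0 + (j:ℕ)) := by
    rw [hA0 j]; ring
  rw [hterm]
  refine P_mul (IsSymmetric.mul ?_ ?_) (P_hpoly hr hrn _ (by omega))
  · have : ((-1 : MvPolynomial (Fin (r0+1)) ℤ)^(j:ℕ)) = C ((-1:ℤ)^(j:ℕ)) := by
      rw [map_pow, map_neg, map_one]
    rw [this]; exact C_isSymmetric _
  · exact det_isSymmetric _ fun i k => hz_isSymmetric _ _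
end
end

section
/- There exists a matrix M(t) with entries in ℤ[t] such that M(t) is symplectic with respect to the standard symplectic form ω_4 (i.e. M(t)^T ω_4 M(t) = ω_4 as matrices over ℤ[t]), M(0) is the 4×4 identity matrix, and M(1) is the block permutation matrix exchanging the two standard 2×2 symplectic blocks (the matrix with rows (0,0,1,0),(0,0,0,1),(1,0,0,0),(0,1,0,0)). -/
open Matrix
set_option maxHeartbeats 2000000

/-- The standard symplectic form `ω₄` as a matrix over `ℤ[t]`. -/
noncomputable def om4 : Matrix (Fin 4) (Fin 4) (Polynomial ℤ) :=
  !![0, 1, 0, 0; -1, 0, 0, 0; 0, 0, 0, 1; 0, 0, -1, 0]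

/-- The block permutation matrix exchanging the two standard 2×2 symplectic blocks. -/
def swapZ : Matrix (Fin 4) (Fin 4) ℤ :=
  !![0, 0, 1, 0; 0, 0, 0, 1; 1, 0, 0, 0; 0, 1, 0, 0]

def omR (R : Type*) [CommRing R] : Matrix (Fin 4) (Fin 4) R :=
  !![0, 1, 0, 0; -1, 0, 0, 0; 0, 0, 0, 1; 0, 0, -1, 0]

def Mfun {R : Type*} [CommRing R] (t : R) : Matrix (Fin 4) (Fin 4) R :=
  !![1 - t^2, 0, -2*t + 13*t^3 - 14*t^5 + 4*t^7, 8*t^2 - 12*t^4 + 4*t^6;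
     0, 1 - t^2, -2*t^2 + 2*t^4, -t + 2*t^3;
     t, 0, 1 - 7*t^2 + 10*t^4 - 4*t^6, -4*t + 8*t^3 - 4*t^5;
     0, 2*t - t^3, 2*t - 4*t^3 + 2*t^5, 1 - 3*t^2 + 2*t^4]

def MTfun {R : Type*} [CommRing R] (t : R) : Matrix (Fin 4) (Fin 4) R :=
  !![1 - t^2, 0, t, 0;
     0, 1 - t^2, 0, 2*t - t^3;
     -2*t + 13*t^3 - 14*t^5 + 4*t^7, -2*t^2 + 2*t^4, 1 - 7*t^2 + 10*t^4 - 4*t^6, 2*t - 4*t^3 + 2*t^5;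
     8*t^2 - 12*t^4 + 4*t^6, -t + 2*t^3, -4*t + 8*t^3 - 4*t^5, 1 - 3*t^2 + 2*t^4]

lemma Mfun_transpose {R : Type*} [CommRing R] (t : R) : (Mfun t)ᵀ = MTfun t := by
  ext i j
  fin_cases i <;> fin_cases j <;> simp [Mfun, MTfun]

lemma Mfun_symplectic {R : Type*} [CommRing R] (t : R) :
    (Mfun t)ᵀ * omR R * Mfun t = omR R := by
  rw [Mfun_transpose]
  ext i j
  fin_cases i <;> fin_cases j <;>
    simp [Mfun, MTfun, omR, Matrix.mul_apply, Fin.sum_univ_four, Matrix.vecHead, Matrix.vecTail] <;> ring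

lemma Mfun_map_eval (a : ℤ) :
    (Mfun (Polynomial.X : Polynomial ℤ)).map (Polynomial.eval a) = Mfun a := by
  ext i j
  fin_cases i <;> fin_cases j <;> simp [Mfun]

/-- There is a matrix `M(t)` over `ℤ[t]`, symplectic for `ω₄` (i.e. `M(t)ᵀ ω₄ M(t) = ω₄`),
with `M(0)` the 4×4 identity matrix and `M(1)` the block permutation matrix exchanging the
two standard 2×2 symplectic blocks. -/
theorem stmt8 :
    ∃ M : Matrix (Fin 4) (Fin 4) (Polynomial ℤ),
      Mᵀ * om4 * M = om4 ∧
      M.map (Polynomial.eval 0) = 1 ∧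
      M.map (Polynomial.eval 1) = swapZ := by
  refine ⟨Mfun Polynomial.X, ?_, ?_, ?_⟩
  · have h := Mfun_symplectic (Polynomial.X : Polynomial ℤ)
    simpa [omR, om4] using h
  · rw [Mfun_map_eval]
    ext i j
    fin_cases i <;> fin_cases j <;> simp [Mfun, Matrix.one_apply] <;> decide
  · rw [Mfun_map_eval]
    ext i j
    fin_cases i <;> fin_cases j <;> simp [Mfun, swapZ] <;> rfl
end

section
/- Every matrix in Sp_{2r}(ℤ) (integer matrices preserving the standard symplectic form ω_{2r}) is a product of elementary symplectic matrices. -/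
open Matrix
set_option maxHeartbeats 1000000

/-- The standard symplectic form `ω_{2r}`: block-diagonal with `r` blocks `((0,1),(−1,0))`. -/
def omSp (r : ℕ) : Matrix (Fin (2 * r)) (Fin (2 * r)) ℤ :=
  Matrix.of fun i j =>
    if ((i : ℕ) + 1 = (j : ℕ) ∧ Even (i : ℕ)) then (1 : ℤ)
    else if ((j : ℕ) + 1 = (i : ℕ) ∧ Even (j : ℕ)) then -1 else 0

/-- An elementary symplectic matrix (symplectic transvection):
`x ↦ x + c·ω(x,v)·v`, i.e. `1 + c • v (ω v)ᵀ`. -/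
def IsElemSp (r : ℕ) (E : Matrix (Fin (2 * r)) (Fin (2 * r)) ℤ) : Prop :=
  ∃ (v : Fin (2 * r) → ℤ) (c : ℤ),
    E = 1 + c • Matrix.vecMulVec v ((omSp r).mulVec v)

namespace SpGen

variable {r : ℕ}

abbrev V (r : ℕ) := Fin (2 * r) → ℤ

/-- partner index within a block -/
def sig (i : Fin (2 * r)) : Fin (2 * r) :=
  if h : Even (i : ℕ) then ⟨(i : ℕ) + 1, by rcases h with ⟨t, ht⟩; have := i.2; omega⟩
  else ⟨(i : ℕ) - 1, by have := i.2; omega⟩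

def eps (i : Fin (2 * r)) : ℤ := if Even (i : ℕ) then 1 else -1

lemma sig_val_even {i : Fin (2 * r)} (h : Even (i : ℕ)) : (sig i : ℕ) = (i : ℕ) + 1 := by
  simp [sig, h]

lemma sig_val_odd {i : Fin (2 * r)} (h : ¬ Even (i : ℕ)) : (sig i : ℕ) = (i : ℕ) - 1 := by
  simp [sig, h]

lemma sig_sig (i : Fin (2 * r)) : sig (sig i) = i := by
  by_cases h : Even (i : ℕ)
  · have hm : (i : ℕ) % 2 = 0 := Nat.even_iff.mp h
    have h1 : (sig i : ℕ) = (i : ℕ) + 1 := sig_val_even h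
    have h2 : ¬ Even ((sig i : ℕ)) := by rw [h1, Nat.even_iff]; omega
    apply Fin.ext; rw [sig_val_odd h2, h1]; omega
  · have hm : (i : ℕ) % 2 = 1 := Nat.odd_iff.mp (Nat.not_even_iff_odd.mp h)
    have h1 : (sig i : ℕ) = (i : ℕ) - 1 := sig_val_odd h
    have h2 : Even ((sig i : ℕ)) := by rw [h1, Nat.even_iff]; omega
    apply Fin.ext; rw [sig_val_even h2, h1]; omega

lemma eps_sig (i : Fin (2 * r)) : eps (sig i) = -eps i := by
  by_cases h : Even (i : ℕ)
  · have hm : (i : ℕ) % 2 = 0 := Nat.even_iff.mp h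
    have h2 : ¬ Even ((sig i : ℕ)) := by rw [sig_val_even h, Nat.even_iff]; omega
    simp [eps, h, h2]
  · have hm : (i : ℕ) % 2 = 1 := Nat.odd_iff.mp (Nat.not_even_iff_odd.mp h)
    have h2 : Even ((sig i : ℕ)) := by rw [sig_val_odd h, Nat.even_iff]; omega
    simp [eps, h, h2]

lemma om_apply (i j : Fin (2 * r)) :
    omSp r i j = if j = sig i then eps i else 0 := by
  by_cases h : Even (i : ℕ)
  · have hm : (i : ℕ) % 2 = 0 := Nat.even_iff.mp h
    have hs : (sig i : ℕ) = (i : ℕ) + 1 := sig_val_even h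
    by_cases hj : j = sig i
    · subst hj
      have hc : ((i : ℕ) + 1 = ((sig i : Fin (2*r)) : ℕ) ∧ Even (i : ℕ)) := ⟨hs.symm, h⟩
      simp only [omSp, Matrix.of_apply, if_pos hc, eps, if_pos h]
      simp
    · have hj' : ¬ ((i : ℕ) + 1 = (j : ℕ) ∧ Even (i : ℕ)) := by
        rintro ⟨h1, -⟩; exact hj (Fin.ext (by rw [hs, h1]))
      have hj'' : ¬ ((j : ℕ) + 1 = (i : ℕ) ∧ Even (j : ℕ)) := by
        rintro ⟨h1, h2⟩
        have := Nat.even_iff.mp h2; omega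
      simp [omSp, hj', hj'', hj]
  · have hm : (i : ℕ) % 2 = 1 := Nat.odd_iff.mp (Nat.not_even_iff_odd.mp h)
    have hs : (sig i : ℕ) = (i : ℕ) - 1 := sig_val_odd h
    by_cases hj : j = sig i
    · subst hj
      have hev : Even ((sig i : ℕ)) := by rw [hs, Nat.even_iff]; omega
      have hcond : ((sig i : Fin (2*r)) : ℕ) + 1 = (i : ℕ) := by rw [hs]; omega
      have hno : ¬ ((i : ℕ) + 1 = ((sig i : Fin (2*r)) : ℕ) ∧ Even (i : ℕ)) := by
        rintro ⟨-, h2⟩; exact h h2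
      have hc : ((sig i : Fin (2*r)) : ℕ) + 1 = (i : ℕ) ∧ Even ((sig i : Fin (2*r)) : ℕ) := ⟨hcond, hev⟩
      simp only [omSp, Matrix.of_apply, if_neg hno, if_pos hc, eps, if_neg h]
      simp
    · have hj' : ¬ ((i : ℕ) + 1 = (j : ℕ) ∧ Even (i : ℕ)) := by rintro ⟨-, h2⟩; exact h h2
      have hj'' : ¬ ((j : ℕ) + 1 = (i : ℕ) ∧ Even (j : ℕ)) := by
        rintro ⟨h1, h2⟩
        exact hj (Fin.ext (by rw [hs]; omega))
      simp [omSp, hj', hj'', hj]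

lemma om_mulVec (x : V r) (i : Fin (2 * r)) :
    (omSp r).mulVec x i = eps i * x (sig i) := by
  simp only [Matrix.mulVec, dotProduct, om_apply, ite_mul, zero_mul]
  rw [Finset.sum_ite_eq' Finset.univ (sig i) (fun j => eps i * x j)]
  simp

/-- the symplectic bilinear form -/
def Bf (x y : V r) : ℤ := x ⬝ᵥ (omSp r).mulVec y

lemma Bf_eq_sum (x y : V r) : Bf x y = ∑ i, x i * (eps i * y (sig i)) := by
  simp [Bf, dotProduct, om_mulVec]

def sigEquiv : Equiv.Perm (Fin (2 * r)) :=
  Function.Involutive.toPerm sig sig_sig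

lemma Bf_skew (x y : V r) : Bf x y = -Bf y x := by
  rw [Bf_eq_sum, Bf_eq_sum, ← Finset.sum_neg_distrib]
  rw [← Equiv.sum_comp (sigEquiv (r := r)) (fun i => -(y i * (eps i * x (sig i))))]
  apply Finset.sum_congr rfl
  intro i _
  have h1 : sigEquiv (r := r) i = sig i := rfl
  rw [h1, sig_sig, eps_sig]
  ring

lemma Bf_self (x : V r) : Bf x x = 0 := by
  have := Bf_skew x x; omega

lemma Bf_add_left (x y z : V r) : Bf (x + y) z = Bf x z + Bf y z := by
  simp [Bf, add_dotProduct]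

lemma Bf_add_right (x y z : V r) : Bf x (y + z) = Bf x y + Bf x z := by
  simp [Bf, Matrix.mulVec_add, dotProduct_add]

lemma Bf_smul_left (c : ℤ) (x y : V r) : Bf (c • x) y = c * Bf x y := by
  rw [Bf_eq_sum, Bf_eq_sum, Finset.mul_sum]
  apply Finset.sum_congr rfl; intro i _; simp [Pi.smul_apply, smul_eq_mul]; ring

lemma Bf_smul_right (c : ℤ) (x y : V r) : Bf x (c • y) = c * Bf x y := by
  rw [Bf_eq_sum, Bf_eq_sum, Finset.mul_sum]
  apply Finset.sum_congr rfl; intro i _; simp [Pi.smul_apply, smul_eq_mul]; ring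

lemma Bf_single_left (i : Fin (2 * r)) (x : V r) :
    Bf (Pi.single i 1) x = eps i * x (sig i) := by
  simp [Bf, single_dotProduct, om_mulVec]

lemma Bf_single_right (i : Fin (2 * r)) (x : V r) :
    Bf x (Pi.single i 1) = -(eps i * x (sig i)) := by
  rw [Bf_skew, Bf_single_left]


/-! ### Transvections -/

def Tv (v : V r) (c : ℤ) (x : V r) : V r := x + (c * Bf x v) • v

def Emat (v : V r) (c : ℤ) : Matrix (Fin (2 * r)) (Fin (2 * r)) ℤ :=
  1 + c • Matrix.vecMulVec v ((omSp r).mulVec v)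

lemma Tv_apply (v : V r) (c : ℤ) (x : V r) (j : Fin (2 * r)) :
    Tv v c x j = x j + (c * Bf x v) * v j := by
  simp [Tv, Pi.add_apply, Pi.smul_apply, smul_eq_mul]

lemma vecMulVec_mulVec (v w x : V r) :
    (Matrix.vecMulVec v w).mulVec x = (w ⬝ᵥ x) • v := by
  funext i
  simp [Matrix.vecMulVec, Matrix.mulVec, dotProduct, Finset.mul_sum,
    Pi.smul_apply, smul_eq_mul, mul_assoc, mul_comm, mul_left_comm]

lemma Emat_mulVec (v : V r) (c : ℤ) (x : V r) :
    (Emat v c).mulVec x = Tv v c x := by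
  unfold Emat Tv
  rw [Matrix.add_mulVec, Matrix.one_mulVec, Matrix.smul_mulVec, vecMulVec_mulVec]
  congr 1
  rw [smul_smul]
  congr 1
  rw [dotProduct_comm]
  rfl

lemma Bf_Tv (v : V r) (c : ℤ) (x y : V r) :
    Bf (Tv v c x) (Tv v c y) = Bf x y := by
  unfold Tv
  rw [Bf_add_left, Bf_add_right, Bf_add_right, Bf_smul_left, Bf_smul_right, Bf_smul_right,
    Bf_smul_left, Bf_self]
  have h := Bf_skew v y
  rw [h]; ring

lemma Tv_fix (v : V r) (c : ℤ) (x : V r) (h : Bf x v = 0) : Tv v c x = x := by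
  unfold Tv; rw [h]; simp

lemma vecMulVec_mul_self (v w : V r) :
    Matrix.vecMulVec v w * Matrix.vecMulVec v w = (w ⬝ᵥ v) • Matrix.vecMulVec v w := by
  ext i j
  simp [Matrix.vecMulVec, Matrix.mul_apply, dotProduct, Finset.mul_sum,
    Finset.sum_mul, Pi.smul_apply, smul_eq_mul]
  apply Finset.sum_congr rfl
  intro t _
  ring

lemma Emat_inv_mul (v : V r) (c : ℤ) : Emat v (-c) * Emat v c = 1 := by
  unfold Emat
  have h0 : ((omSp r).mulVec v) ⬝ᵥ v = 0 := by
    rw [dotProduct_comm]; exact Bf_self v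
  have h := vecMulVec_mul_self v ((omSp r).mulVec v)
  rw [h0, zero_smul] at h
  rw [Matrix.add_mul, Matrix.mul_add, Matrix.mul_add, Matrix.one_mul, Matrix.mul_one,
    Matrix.smul_mul, Matrix.one_mul]
  have h2 : Matrix.vecMulVec v ((omSp r).mulVec v) *
      (c • Matrix.vecMulVec v ((omSp r).mulVec v)) = 0 := by
    rw [Matrix.mul_smul, h, smul_zero]
  rw [h2, smul_zero, add_zero, neg_smul, add_neg_cancel_right]

/-- matrices are determined by the bilinear pairings -/
lemma mat_ext_bilin {A B : Matrix (Fin (2 * r)) (Fin (2 * r)) ℤ}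
    (h : ∀ x y : V r, x ⬝ᵥ A.mulVec y = x ⬝ᵥ B.mulVec y) : A = B := by
  ext i j
  have := h (Pi.single i 1) (Pi.single j 1)
  rw [Matrix.mulVec_single, Matrix.mulVec_single] at this
  simpa using this

lemma Emat_symp (v : V r) (c : ℤ) :
    (Emat v c)ᵀ * omSp r * Emat v c = omSp r := by
  apply mat_ext_bilin
  intro x y
  have key : ∀ z w : V r, z ⬝ᵥ ((Emat v c)ᵀ * omSp r * Emat v c).mulVec w
      = Bf ((Emat v c).mulVec z) ((Emat v c).mulVec w) := by
    intro z w
    rw [← Matrix.mulVec_mulVec, ← Matrix.mulVec_mulVec]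
    rw [Matrix.dotProduct_mulVec z, Matrix.vecMul_transpose]
    rfl
  rw [key, Emat_mulVec, Emat_mulVec, Bf_Tv]
  rfl

/-! ### Reachability by transvections -/

def Stp (P : V r → Prop) (x y : V r) : Prop := ∃ v c, P v ∧ y = Tv v c x

def Reach (P : V r → Prop) : V r → V r → Prop := Relation.ReflTransGen (Stp P)

lemma reach_refl (P : V r → Prop) (x : V r) : Reach P x x := Relation.ReflTransGen.refl

lemma reach_single {P : V r → Prop} {v : V r} (h : P v) (c : ℤ) (x : V r) :
    Reach P x (Tv v c x) :=
  Relation.ReflTransGen.single ⟨v, c, h, rfl⟩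

lemma reach_trans {P : V r → Prop} {x y z : V r} (h1 : Reach P x y) (h2 : Reach P y z) :
    Reach P x z := Relation.ReflTransGen.trans h1 h2

lemma reach_mono {P Q : V r → Prop} (h : ∀ v, P v → Q v) {x y : V r}
    (hr : Reach P x y) : Reach Q x y := by
  refine Relation.ReflTransGen.mono ?_ _ _ hr
  rintro a b ⟨v, c, hv, rfl⟩
  exact ⟨v, c, h v hv, rfl⟩

/-- reachability yields lists of elementary matrices (together with an inverse list) -/
lemma reach_lists {P : V r → Prop} {x y : V r} (h : Reach P x y) :
    ∃ L L' : List (Matrix (Fin (2 * r)) (Fin (2 * r)) ℤ),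
      (∀ E ∈ L, ∃ v c, P v ∧ E = Emat v c) ∧
      (∀ E ∈ L', ∃ v c, P v ∧ E = Emat v c) ∧
      L.prod.mulVec x = y ∧ L'.prod * L.prod = 1 := by
  induction h using Relation.ReflTransGen.head_induction_on with
  | refl =>
      exact ⟨[], [], by simp, by simp, by simp [Matrix.one_mulVec], by simp⟩
  | head h1 _ ih =>
      obtain ⟨v, c, hv, rfl⟩ := h1
      obtain ⟨L, L', hL, hL', hmv, hinv⟩ := ih
      refine ⟨L ++ [Emat v c], [Emat v (-c)] ++ L', ?_, ?_, ?_, ?_⟩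
      · intro E hE
        rcases List.mem_append.mp hE with h | h
        · exact hL E h
        · simp at h; exact ⟨v, c, hv, h⟩
      · intro E hE
        rcases List.mem_append.mp hE with h | h
        · simp at h; exact ⟨v, -c, hv, h⟩
        · exact hL' E h
      · rw [List.prod_append, List.prod_singleton, ← Matrix.mulVec_mulVec, Emat_mulVec]
        exact hmv
      · rw [List.prod_append, List.prod_append, List.prod_singleton, List.prod_singleton]
        calc Emat v (-c) * L'.prod * (L.prod * Emat v c)
            = Emat v (-c) * (L'.prod * L.prod) * Emat v c := by
              rw [Matrix.mul_assoc, Matrix.mul_assoc, Matrix.mul_assoc]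
          _ = 1 := by rw [hinv, Matrix.mul_one, Emat_inv_mul]

lemma prod_fix {P : V r → Prop} {L : List (Matrix (Fin (2 * r)) (Fin (2 * r)) ℤ)}
    (hL : ∀ E ∈ L, ∃ v c, P v ∧ E = Emat v c) {z : V r}
    (hz : ∀ v, P v → Bf z v = 0) : L.prod.mulVec z = z := by
  induction L with
  | nil => simp [Matrix.one_mulVec]
  | cons E L ih =>
      obtain ⟨v, c, hv, rfl⟩ := hL E List.mem_cons_self
      rw [List.prod_cons, ← Matrix.mulVec_mulVec,
        ih (fun E hE => hL E (List.mem_cons_of_mem _ hE)), Emat_mulVec]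
      exact Tv_fix v c z (hz v hv)

lemma prod_Bf {P : V r → Prop} {L : List (Matrix (Fin (2 * r)) (Fin (2 * r)) ℤ)}
    (hL : ∀ E ∈ L, ∃ v c, P v ∧ E = Emat v c) (x y : V r) :
    Bf (L.prod.mulVec x) (L.prod.mulVec y) = Bf x y := by
  induction L with
  | nil => simp [Matrix.one_mulVec]
  | cons E L ih =>
      obtain ⟨v, c, hv, rfl⟩ := hL E List.mem_cons_self
      rw [List.prod_cons, ← Matrix.mulVec_mulVec, ← Matrix.mulVec_mulVec, Emat_mulVec,
        Emat_mulVec, Bf_Tv]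
      exact ih (fun E hE => hL E (List.mem_cons_of_mem _ hE))

lemma prod_coord {P : V r → Prop} {L : List (Matrix (Fin (2 * r)) (Fin (2 * r)) ℤ)}
    (hL : ∀ E ∈ L, ∃ v c, P v ∧ E = Emat v c) {j : Fin (2 * r)}
    (hP : ∀ v, P v → v j = 0) (x : V r) : L.prod.mulVec x j = x j := by
  induction L with
  | nil => simp [Matrix.one_mulVec]
  | cons E L ih =>
      obtain ⟨v, c, hv, rfl⟩ := hL E List.mem_cons_self
      rw [List.prod_cons, ← Matrix.mulVec_mulVec, Emat_mulVec, Tv_apply, hP v hv]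
      rw [mul_zero, add_zero]
      exact ih (fun E hE => hL E (List.mem_cons_of_mem _ hE))

lemma symp_mul {A B : Matrix (Fin (2 * r)) (Fin (2 * r)) ℤ}
    (hA : Aᵀ * omSp r * A = omSp r) (hB : Bᵀ * omSp r * B = omSp r) :
    (A * B)ᵀ * omSp r * (A * B) = omSp r := by
  calc (A * B)ᵀ * omSp r * (A * B) = Bᵀ * (Aᵀ * omSp r * A) * B := by
        rw [Matrix.transpose_mul]; simp only [Matrix.mul_assoc]
    _ = omSp r := by rw [hA]; exact hB

lemma prod_symp {P : V r → Prop} {L : List (Matrix (Fin (2 * r)) (Fin (2 * r)) ℤ)}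
    (hL : ∀ E ∈ L, ∃ v c, P v ∧ E = Emat v c)
    {M : Matrix (Fin (2 * r)) (Fin (2 * r)) ℤ} (hM : Mᵀ * omSp r * M = omSp r) :
    (L.prod * M)ᵀ * omSp r * (L.prod * M) = omSp r := by
  induction L with
  | nil => simpa using hM
  | cons E L ih =>
      obtain ⟨v, c, hv, rfl⟩ := hL E List.mem_cons_self
      have ih' := ih (fun E hE => hL E (List.mem_cons_of_mem _ hE))
      have e1 : (Emat v c :: L).prod * M = Emat v c * (L.prod * M) := by
        rw [List.prod_cons, Matrix.mul_assoc]
      rw [e1]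
      exact symp_mul (Emat_symp v c) ih'

/-! ### Block indices -/

def i0 (k : ℕ) (hk : k < r) : Fin (2 * r) := ⟨2 * k, by omega⟩
def i1 (k : ℕ) (hk : k < r) : Fin (2 * r) := ⟨2 * k + 1, by omega⟩

lemma sig_i0 (k : ℕ) (hk : k < r) : sig (i0 k hk) = i1 k hk := by
  apply Fin.ext
  rw [sig_val_even (by simpa [i0] using ⟨k, by omega⟩)]
  simp [i0, i1]

lemma sig_i1 (k : ℕ) (hk : k < r) : sig (i1 k hk) = i0 k hk := by
  rw [← sig_i0 k hk, sig_sig]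

lemma eps_i0 (k : ℕ) (hk : k < r) : eps (i0 k hk) = 1 := by
  simp only [eps]
  rw [if_pos]; exact ⟨k, by simp only [i0]; omega⟩

lemma eps_i1 (k : ℕ) (hk : k < r) : eps (i1 k hk) = -1 := by
  simp only [eps]
  rw [if_neg]
  rw [Nat.even_iff]; simp only [i1]; omega

/-- support predicate: coordinates below `2*k` vanish -/
def Pk (k : ℕ) (v : V r) : Prop := ∀ j : Fin (2 * r), (j : ℕ) < 2 * k → v j = 0

lemma Pk_single {k : ℕ} {i : Fin (2 * r)} (hi : 2 * k ≤ (i : ℕ)) :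
    Pk k (Pi.single i (1 : ℤ)) := by
  intro j hj
  apply Pi.single_eq_of_ne
  intro h; rw [h] at hj; omega

lemma Pk_add {k : ℕ} {v w : V r} (hv : Pk k v) (hw : Pk k w) : Pk k (v + w) := by
  intro j hj; simp [hv j hj, hw j hj]

lemma Pk_smul {k : ℕ} (c : ℤ) {v : V r} (hv : Pk k v) : Pk k (c • v) := by
  intro j hj; simp [hv j hj]

lemma Pk_sub {k : ℕ} {v w : V r} (hv : Pk k v) (hw : Pk k w) : Pk k (v - w) := by
  intro j hj; simp [hv j hj, hw j hj]

lemma reach_low {k : ℕ} {x y : V r} (h : Reach (Pk k) x y) :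
    ∀ j : Fin (2 * r), (j : ℕ) < 2 * k → y j = x j := by
  induction h with
  | refl => intro j hj; rfl
  | tail _ h2 ih =>
      obtain ⟨v, c, hv, rfl⟩ := h2
      intro j hj
      rw [Tv_apply, hv j hj, mul_zero, add_zero]
      exact ih j hj

/-! ### Moves -/

lemma move_single {k : ℕ} (i : Fin (2 * r)) (hi : 2 * k ≤ (i : ℕ)) (c : ℤ) (x : V r) :
    ∃ x', Reach (Pk k) x x' ∧
      x' i = x i + c * (-(eps i * x (sig i))) ∧
      (∀ j, j ≠ i → x' j = x j) := by
  refine ⟨Tv (Pi.single i 1) c x, reach_single (Pk_single hi) c x, ?_, ?_⟩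
  · rw [Tv_apply, Bf_single_right]; simp
  · intro j hj
    rw [Tv_apply, Bf_single_right, Pi.single_eq_of_ne hj, mul_zero, add_zero]

lemma move_two {k : ℕ} (i i' : Fin (2 * r)) (hne : i ≠ i')
    (hi : 2 * k ≤ (i : ℕ)) (hi' : 2 * k ≤ (i' : ℕ)) (c : ℤ) (x : V r) :
    ∃ x', Reach (Pk k) x x' ∧
      x' i = x i + c * (-(eps i * x (sig i)) + -(eps i' * x (sig i'))) ∧
      x' i' = x i' + c * (-(eps i * x (sig i)) + -(eps i' * x (sig i'))) ∧
      (∀ j, j ≠ i → j ≠ i' → x' j = x j) := by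
  set v : V r := Pi.single i 1 + Pi.single i' 1 with hv
  have hPk : Pk k v := Pk_add (Pk_single hi) (Pk_single hi')
  have hB : Bf x v = -(eps i * x (sig i)) + -(eps i' * x (sig i')) := by
    rw [hv, Bf_add_right, Bf_single_right, Bf_single_right]
  refine ⟨Tv v c x, reach_single hPk c x, ?_, ?_, ?_⟩
  · rw [Tv_apply, hB, hv]
    simp [Pi.single_eq_of_ne (Ne.symm hne), Pi.single_eq_of_ne hne]
  · rw [Tv_apply, hB, hv]
    simp [Pi.single_eq_of_ne (Ne.symm hne), Pi.single_eq_of_ne hne]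
  · intro j hj hj'
    rw [Tv_apply, hB, hv]
    simp [Pi.single_eq_of_ne hj, Pi.single_eq_of_ne hj']

/-! ### Integer gcd helpers -/

lemma gcd_addmul (a b c : ℤ) : Int.gcd a (b + a * c) = Int.gcd a b := by
  apply Nat.dvd_antisymm
  · have h1 : (↑(Int.gcd a (b + a * c)) : ℤ) ∣ a := (Int.gcd_dvd_left _ _)
    have h2 : (↑(Int.gcd a (b + a * c)) : ℤ) ∣ b + a * c := (Int.gcd_dvd_right _ _)
    have h3 : (↑(Int.gcd a (b + a * c)) : ℤ) ∣ b := by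
      have := h2.sub (h1.mul_right c); simpa using this
    exact Int.natCast_dvd_natCast.mp (Int.dvd_coe_gcd h1 h3)
  · have h1 : (↑(Int.gcd a b) : ℤ) ∣ a := (Int.gcd_dvd_left _ _)
    have h2 : (↑(Int.gcd a b) : ℤ) ∣ b := (Int.gcd_dvd_right _ _)
    have h3 : (↑(Int.gcd a b) : ℤ) ∣ b + a * c := h2.add (h1.mul_right c)
    exact Int.natCast_dvd_natCast.mp (Int.dvd_coe_gcd h1 h3)

lemma emod_bounds (p q : ℤ) (hq : q ≠ 0) : 0 ≤ p % q ∧ (p % q).natAbs < q.natAbs := by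
  rcases lt_or_gt_of_ne hq with h | h
  · have he : p % q = p % (-q) := by
      have := Int.emod_neg p (-q); simpa using this.symm
    have h1 : 0 ≤ p % (-q) := Int.emod_nonneg p (by omega)
    have h2 : p % (-q) < -q := Int.emod_lt_of_pos p (by omega)
    rw [he]; omega
  · have h1 : 0 ≤ p % q := Int.emod_nonneg p hq
    have h2 : p % q < q := Int.emod_lt_of_pos p h
    omega

lemma ne_of_val_ne' {a b : Fin (2 * r)} (h : (a : ℕ) ≠ (b : ℕ)) : a ≠ b :=
  fun e => h (by rw [e])

/-! ### Euclid within block k -/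

lemma euclid {k : ℕ} (hk : k < r) :
    ∀ (n : ℕ) (x : V r), (x (i1 k hk)).natAbs ≤ n →
    ∃ y, Reach (Pk k) x y ∧ y (i1 k hk) = 0 ∧
      (∀ j, j ≠ i0 k hk → j ≠ i1 k hk → y j = x j) ∧
      Int.gcd (y (i0 k hk)) (y (i1 k hk)) = Int.gcd (x (i0 k hk)) (x (i1 k hk)) := by
  have hne01 : i1 k hk ≠ i0 k hk := ne_of_val_ne' (by simp only [i0, i1]; omega)
  have e0 : eps (i0 k hk) = 1 := eps_i0 k hk
  have e1 : eps (i1 k hk) = -1 := eps_i1 k hk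
  have s0 : sig (i0 k hk) = i1 k hk := sig_i0 k hk
  have s1 : sig (i1 k hk) = i0 k hk := sig_i1 k hk
  intro n
  induction n with
  | zero =>
      intro x hx
      have : x (i1 k hk) = 0 := by
        have := Int.natAbs_eq_zero.mp (Nat.le_zero.mp hx); exact this
      exact ⟨x, reach_refl _ _, this, fun j _ _ => rfl, rfl⟩
  | succ n ih =>
      intro x hx
      by_cases hq : x (i1 k hk) = 0
      · exact ⟨x, reach_refl _ _, hq, fun j _ _ => rfl, rfl⟩
      set p := x (i0 k hk) with hp
      set q := x (i1 k hk) with hqdef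
      -- step 1 : make the first coordinate p % q
      obtain ⟨x1, hr1, h1i, h1o⟩ :=
        move_single (k := k) (i0 k hk) (by simp only [i0]; omega) (p / q) x
      have hx1i : x1 (i0 k hk) = p % q := by
        rw [h1i, e0, s0, ← hqdef, Int.emod_def]; ring
      have hx1q : x1 (i1 k hk) = q := h1o _ hne01
      by_cases hs : p % q = 0
      · -- pair (0, q) : make it (q, 0)
        obtain ⟨x2, hr2, h2i, h2o⟩ :=
          move_single (k := k) (i0 k hk) (by simp only [i0]; omega) (-1) x1
        have hx2i : x2 (i0 k hk) = q := by
          rw [h2i, e0, s0, hx1q, hx1i, hs]; ring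
        have hx2q : x2 (i1 k hk) = q := by rw [h2o _ hne01, hx1q]
        obtain ⟨x3, hr3, h3i, h3o⟩ :=
          move_single (k := k) (i1 k hk) (by simp only [i1]; omega) (-1) x2
        have hx3q : x3 (i1 k hk) = 0 := by
          rw [h3i, e1, s1, hx2i, hx2q]; ring
        have hx3i : x3 (i0 k hk) = q := by
          rw [h3o _ (Ne.symm hne01), hx2i]
        refine ⟨x3, reach_trans hr1 (reach_trans hr2 hr3), hx3q, ?_, ?_⟩
        · intro j hj0 hj1
          rw [h3o _ hj1, h2o _ hj0, h1o _ hj0]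
        · rw [hx3i, hx3q]
          have hdvd : q ∣ p := Int.dvd_of_emod_eq_zero hs
          have h4 : p.gcd q = q.natAbs := by rw [Int.gcd_comm]; exact Int.gcd_eq_natAbs_left hdvd
          rw [Int.gcd_zero_right, h4]
      · -- pair (p % q, q) with p % q ≠ 0 : reduce q mod (p % q) and recurse
        set s := p % q with hsdef
        obtain ⟨x2, hr2, h2i, h2o⟩ :=
          move_single (k := k) (i1 k hk) (by simp only [i1]; omega) (-(q / s)) x1
        have hx2q : x2 (i1 k hk) = q % s := by
          rw [h2i, e1, s1, hx1i, hx1q, Int.emod_def]; ring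
        have hx2i : x2 (i0 k hk) = s := by rw [h2o _ (Ne.symm hne01), hx1i]
        have hb1 := emod_bounds p q hq
        have hb2 := emod_bounds q s hs
        have hrec : (x2 (i1 k hk)).natAbs ≤ n := by
          rw [hx2q]; omega
        obtain ⟨y, hry, hy1, hyo, hyg⟩ := ih x2 hrec
        refine ⟨y, reach_trans hr1 (reach_trans hr2 hry), hy1, ?_, ?_⟩
        · intro j hj0 hj1
          rw [hyo j hj0 hj1, h2o _ hj1, h1o _ hj0]
        · rw [hyg, hx2i, hx2q]
          have g1 : Int.gcd s (q % s) = Int.gcd s q := by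
            rw [Int.emod_def, show q - s * (q / s) = q + s * (-(q / s)) by ring, gcd_addmul]
          have g2 : Int.gcd s q = Int.gcd p q := by
            rw [hsdef, Int.gcd_comm, Int.emod_def,
              show p - q * (p / q) = p + q * (-(p / q)) by ring, gcd_addmul, Int.gcd_comm]
          rw [g1, g2]

/-! ### Lemma A : moving a unimodular column to the basis vector -/

lemma lemA_aux {k : ℕ} (hk : k < r) :
    ∀ (t : ℕ) (x : V r),
    (∀ j : Fin (2 * r), (j : ℕ) < 2 * k → x j = 0) →
    (∀ d : ℤ, d ∣ x (i0 k hk) → d ∣ x (i1 k hk) →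
      (∀ j : Fin (2 * r), 2 * r - 2 * t ≤ (j : ℕ) → d ∣ x j) → d ∣ 1) →
    ∃ y, Reach (Pk k) x y ∧ Int.gcd (y (i0 k hk)) (y (i1 k hk)) = 1 := by
  intro t
  induction t with
  | zero =>
      intro x hlow hinv
      refine ⟨x, reach_refl _ _, ?_⟩
      have h1 : ((Int.gcd (x (i0 k hk)) (x (i1 k hk)) : ℤ)) ∣ 1 := by
        refine hinv _ (Int.gcd_dvd_left _ _) (Int.gcd_dvd_right _ _) ?_
        intro j hj
        have := j.2; omega
      have := Int.natCast_dvd_natCast.mp (by exact_mod_cast h1)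
      exact Nat.dvd_one.mp this
  | succ t ih =>
      intro x hlow hinv
      by_cases hcase : 2 * r - 2 * (t + 1) ≤ 2 * k
      · refine ih x hlow ?_
        intro d hd0 hd1 hhigh
        refine hinv d hd0 hd1 ?_
        intro j hj
        by_cases hj2 : 2 * r - 2 * t ≤ (j : ℕ)
        · exact hhigh j hj2
        · -- j is below the old threshold, so j < 2*k+2
          by_cases hj3 : (j : ℕ) < 2 * k
          · rw [hlow j hj3]; exact dvd_zero d
          · have hval : (j : ℕ) = 2 * k ∨ (j : ℕ) = 2 * k + 1 := by omega
            rcases hval with h | h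
            · have : j = i0 k hk := Fin.ext (by simp only [i0]; omega)
              rw [this]; exact hd0
            · have : j = i1 k hk := Fin.ext (by simp only [i1]; omega)
              rw [this]; exact hd1
      · -- a genuine block m = r - t - 1 > k to merge
        set m := r - t - 1 with hmdef
        have hm : m < r := by omega
        have hmk : k < m := by omega
        have hmval : 2 * m = 2 * r - 2 * (t + 1) := by omega
        set I0 := i0 k hk
        set I1 := i1 k hk
        set J0 := i0 m hm with hJ0
        set J1 := i1 m hm with hJ1
        have vI0 : (I0 : ℕ) = 2 * k := rfl
        have vI1 : (I1 : ℕ) = 2 * k + 1 := rfl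
        have vJ0 : (J0 : ℕ) = 2 * m := rfl
        have vJ1 : (J1 : ℕ) = 2 * m + 1 := rfl
        have neI1J1 : I1 ≠ J1 := ne_of_val_ne' (by omega)
        have neI1J0 : I1 ≠ J0 := ne_of_val_ne' (by omega)
        have neJ0I0 : J0 ≠ I0 := ne_of_val_ne' (by omega)
        have neJ0I1 : J0 ≠ I1 := ne_of_val_ne' (by omega)
        have neJ1I0 : J1 ≠ I0 := ne_of_val_ne' (by omega)
        have neJ1I1 : J1 ≠ I1 := ne_of_val_ne' (by omega)
        have eI1 : eps I1 = -1 := eps_i1 k hk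
        have eJ1 : eps J1 = -1 := eps_i1 m hm
        have eJ0 : eps J0 = 1 := eps_i0 m hm
        have sI1 : sig I1 = I0 := sig_i1 k hk
        have sJ1 : sig J1 = J0 := sig_i1 m hm
        have sJ0 : sig J0 = J1 := sig_i0 m hm
        -- op 1 : euclid at block k
        obtain ⟨x1, hr1, h1z, h1o, h1g⟩ := euclid hk (x I1).natAbs x le_rfl
        set δ := x1 I0 with hδ
        -- op 2 : couple with J1
        obtain ⟨x2, hr2, h2a, h2b, h2o⟩ :=
          move_two (k := k) I1 J1 neI1J1 (by omega) (by omega) 1 x1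
        have hterm2 : -(eps I1 * x1 (sig I1)) + -(eps J1 * x1 (sig J1)) = δ + x J0 := by
          rw [eI1, eJ1, sI1, sJ1, ← hδ, h1o J0 neJ0I0 neJ0I1]; ring
        have hx2I1 : x2 I1 = δ + x J0 := by rw [h2a, hterm2, h1z]; ring
        have hx2I0 : x2 I0 = δ := by
          rw [h2o I0 (Ne.symm (ne_of_val_ne' (by omega))) (Ne.symm neJ1I0)]
        have hx2J1 : x2 J1 = x J1 + (δ + x J0) := by
          rw [h2b, hterm2, h1o J1 neJ1I0 neJ1I1]; ring
        -- op 3 : euclid again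
        obtain ⟨x3, hr3, h3z, h3o, h3g⟩ := euclid hk (x2 I1).natAbs x2 le_rfl
        set δ2 := x3 I0 with hδ2
        have hx3J1 : x3 J1 = x J1 + (δ + x J0) := by
          rw [h3o J1 neJ1I0 neJ1I1, hx2J1]
        have hx3J0 : x3 J0 = x2 J0 := h3o J0 neJ0I0 neJ0I1
        -- op 4 : couple with J0
        obtain ⟨x4, hr4, h4a, h4b, h4o⟩ :=
          move_two (k := k) I1 J0 neI1J0 (by omega) (by omega) 1 x3
        have hterm4 : -(eps I1 * x3 (sig I1)) + -(eps J0 * x3 (sig J0)) = δ2 - x3 J1 := by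
          rw [eI1, eJ0, sI1, sJ0, ← hδ2]; ring
        have hx4I1 : x4 I1 = δ2 - x3 J1 := by rw [h4a, hterm4, h3z]; ring
        have hx4I0 : x4 I0 = δ2 := by
          rw [h4o I0 (Ne.symm (ne_of_val_ne' (by omega))) (Ne.symm neJ0I0)]
        -- op 5 : final euclid
        obtain ⟨y, hr5, h5z, h5o, h5g⟩ := euclid hk (x4 I1).natAbs x4 le_rfl
        have hreach : Reach (Pk k) x y :=
          reach_trans hr1 (reach_trans hr2 (reach_trans hr3 (reach_trans hr4 hr5)))
        have hinv' : ∀ d : ℤ, d ∣ y I0 → d ∣ y I1 →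
            (∀ j : Fin (2 * r), 2 * r - 2 * t ≤ (j : ℕ) → d ∣ y j) → d ∣ 1 := by
          intro d hd0 hd1 hhigh
          -- unravel the divisibility chain
          have hdg : d ∣ (Int.gcd (y I0) (y I1) : ℤ) := Int.dvd_coe_gcd hd0 hd1
          rw [h5g] at hdg
          have hd4a : d ∣ x4 I0 := hdg.trans (Int.gcd_dvd_left _ _)
          have hd4b : d ∣ x4 I1 := hdg.trans (Int.gcd_dvd_right _ _)
          have hdδ2 : d ∣ δ2 := by rw [← hx4I0]; exact hd4a
          have hd4b' : d ∣ δ2 - x3 J1 := by rw [← hx4I1]; exact hd4b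
          have hdQ : d ∣ x3 J1 := by
            have h := hdδ2.sub hd4b'
            have e : δ2 - (δ2 - x3 J1) = x3 J1 := by ring
            rwa [e] at h
          have hdg3 : d ∣ (Int.gcd (x3 I0) (x3 I1) : ℤ) :=
            Int.dvd_coe_gcd (by rw [← hδ2] at *; exact hdδ2) (by rw [h3z]; exact dvd_zero d)
          rw [h3g] at hdg3
          have hdδP : d ∣ x2 I1 := hdg3.trans (Int.gcd_dvd_right _ _)
          have hdδ : d ∣ δ := by
            have := hdg3.trans (Int.gcd_dvd_left _ _); rw [hx2I0] at this; exact this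
          have hdP : d ∣ x J0 := by
            have := hdδP; rw [hx2I1] at this
            have := this.sub hdδ; simpa using this
          have hdQ' : d ∣ x J1 := by
            have h := hdQ; rw [hx3J1] at h
            have h2 := (h.sub hdδ).sub hdP
            have e : x J1 + (δ + x J0) - δ - x J0 = x J1 := by ring
            rwa [e] at h2
          have hdg1 : d ∣ (Int.gcd (x1 I0) (x1 I1) : ℤ) :=
            Int.dvd_coe_gcd (by rw [← hδ]; exact hdδ) (by rw [h1z]; exact dvd_zero d)
          rw [h1g] at hdg1
          have hdxI0 : d ∣ x I0 := hdg1.trans (Int.gcd_dvd_left _ _)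
          have hdxI1 : d ∣ x I1 := hdg1.trans (Int.gcd_dvd_right _ _)
          refine hinv d hdxI0 hdxI1 ?_
          intro j hj
          by_cases hjm : (j : ℕ) = 2 * m
          · have : j = J0 := Fin.ext (by omega)
            rw [this]; exact hdP
          by_cases hjm1 : (j : ℕ) = 2 * m + 1
          · have : j = J1 := Fin.ext (by omega)
            rw [this]; exact hdQ'
          -- j is strictly above the block m : untouched by all ops
          have hjhigh : 2 * r - 2 * t ≤ (j : ℕ) := by omega
          have hyj : y j = x j := by
            have n0 : j ≠ I0 := ne_of_val_ne' (by omega)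
            have n1 : j ≠ I1 := ne_of_val_ne' (by omega)
            have n2 : j ≠ J0 := ne_of_val_ne' (by omega)
            have n3 : j ≠ J1 := ne_of_val_ne' (by omega)
            rw [h5o j n0 n1, h4o j n1 n2, h3o j n0 n1, h2o j n1 n3, h1o j n0 n1]
          rw [← hyj]
          exact hhigh j hjhigh
        obtain ⟨y2, hr6, hg6⟩ :=
          ih y (fun j hj => by rw [reach_low hreach j hj]; exact hlow j hj) hinv'
        exact ⟨y2, reach_trans hreach hr6, hg6⟩

lemma lemA {k : ℕ} (hk : k < r) (a : V r)
    (hlow : ∀ j : Fin (2 * r), (j : ℕ) < 2 * k → a j = 0)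
    (hgcd : ∀ d : ℤ, (∀ j, d ∣ a j) → d ∣ 1) :
    Reach (Pk k) a (Pi.single (i0 k hk) 1) := by
  obtain ⟨y, hry, hyg⟩ := lemA_aux hk r a hlow
    (fun d hd0 hd1 hhigh => hgcd d (fun j => hhigh j (by omega)))
  obtain ⟨z, hrz, hz1, hzo, hzg⟩ := euclid hk (y (i1 k hk)).natAbs y le_rfl
  rw [hyg] at hzg
  have hδ : (z (i0 k hk)).natAbs = 1 := by
    rw [hz1, Int.gcd_zero_right] at hzg; exact hzg
  have hδ' : z (i0 k hk) = 1 ∨ z (i0 k hk) = -1 := by omega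
  -- make the (2k+1)-st coordinate -1
  obtain ⟨w, hrw, hwa, hwo⟩ :=
    move_single (k := k) (i1 k hk) (by simp only [i1]; omega) (-(z (i0 k hk))) z
  have hwI1 : w (i1 k hk) = -1 := by
    rw [hwa, eps_i1 k hk, sig_i1 k hk, hz1]
    rcases hδ' with h | h <;> rw [h] <;> ring
  have hwlow : ∀ j : Fin (2 * r), (j : ℕ) < 2 * k → w j = 0 := by
    intro j hj
    rw [reach_low (reach_trans hry (reach_trans hrz hrw)) j hj]
    exact hlow j hj
  -- final transvection sends w to the basis vector
  set e : V r := Pi.single (i0 k hk) 1 with he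
  have hPv : Pk k (e - w) := by
    intro j hj
    have h1 : e j = 0 := Pk_single (by simp only [i0]; omega) j hj
    simp [h1, hwlow j hj]
  have hBf : Bf w (e - w) = 1 := by
    have : e - w = e + (-1 : ℤ) • w := by funext j; simp [sub_eq_add_neg]
    rw [this, Bf_add_right, Bf_smul_right, Bf_self, he, Bf_single_right,
      eps_i0 k hk, sig_i0 k hk, hwI1]
    ring
  have hfin : Tv (e - w) 1 w = e := by
    unfold Tv; rw [hBf]; funext j; simp
  have := reach_single (P := Pk k) hPv 1 w
  rw [hfin] at this
  exact reach_trans hry (reach_trans hrz (reach_trans hrw this))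

/-! ### Lemma B : with pivot fixed, clear the rest of the column -/

def Pk' (k : ℕ) (hk : k < r) (v : V r) : Prop := Pk k v ∧ v (i1 k hk) = 0

lemma move_gen {P : V r → Prop} (v : V r) (hv : P v) (c : ℤ) (x : V r) :
    ∃ x', Reach P x x' ∧ ∀ j, x' j = x j + (c * Bf x v) * v j :=
  ⟨Tv v c x, reach_single hv c x, fun j => Tv_apply v c x j⟩

lemma lemB_aux {k : ℕ} (hk : k < r) :
    ∀ (t : ℕ) (x : V r),
    x (i1 k hk) = 1 →
    (∀ j : Fin (2 * r), (j : ℕ) < 2 * k → x j = 0) →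
    (∀ j : Fin (2 * r), 2 * k + 2 + 2 * t ≤ (j : ℕ) → x j = 0) →
    Reach (Pk' k hk) x (Pi.single (i1 k hk) 1) := by
  intro t
  set I0 := i0 k hk with hI0
  set I1 := i1 k hk with hI1
  have vI0 : (I0 : ℕ) = 2 * k := rfl
  have vI1 : (I1 : ℕ) = 2 * k + 1 := rfl
  have eI0 : eps I0 = 1 := eps_i0 k hk
  have sI0 : sig I0 = I1 := sig_i0 k hk
  have neI01 : I0 ≠ I1 := ne_of_val_ne' (by omega)
  induction t with
  | zero =>
      intro x hpiv hlow hhigh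
      -- clear the coordinate I0 using the pivot, giving exactly the basis vector
      set v : V r := Pi.single I0 1 with hv
      have hPv : Pk' k hk v := by
        constructor
        · exact Pk_single (by omega)
        · exact Pi.single_eq_of_ne (Ne.symm neI01) 1
      obtain ⟨x', hr, hx'⟩ := move_gen v hPv (x I0) x
      have hBv : Bf x v = -1 := by
        rw [hv, Bf_single_right, eI0, sI0, hpiv]; ring
      have : x' = Pi.single I1 1 := by
        funext j
        by_cases hj : j = I1
        · subst hj
          rw [hx', hBv, hv, Pi.single_eq_of_ne (Ne.symm neI01) 1]
          simp [hpiv]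
        · rw [hx', hBv]
          by_cases hj0 : j = I0
          · subst hj0
            rw [hv, Pi.single_eq_same, Pi.single_eq_of_ne hj]
            ring
          · rw [hv, Pi.single_eq_of_ne hj0, Pi.single_eq_of_ne hj, mul_zero, add_zero]
            -- x j = 0 for all remaining coordinates
            by_cases hcl : (j : ℕ) < 2 * k
            · exact hlow j hcl
            · have : 2 * k + 2 + 2 * 0 ≤ (j : ℕ) := by
                have h0 : (j : ℕ) ≠ 2 * k := fun h => hj0 (Fin.ext (by omega))
                have h1 : (j : ℕ) ≠ 2 * k + 1 := fun h => hj (Fin.ext (by omega))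
                omega
              exact hhigh j this
      rw [this] at hr
      exact hr
  | succ t ih =>
      intro x hpiv hlow hhigh
      by_cases hcase : 2 * r ≤ 2 * k + 2 + 2 * t
      · exact ih x hpiv hlow (fun j hj => by have := j.2; omega)
      · set m := k + 1 + t with hmdef
        have hm : m < r := by omega
        set J0 := i0 m hm with hJ0
        set J1 := i1 m hm with hJ1
        have vJ0 : (J0 : ℕ) = 2 * m := rfl
        have vJ1 : (J1 : ℕ) = 2 * m + 1 := rfl
        have eJ0 : eps J0 = 1 := eps_i0 m hm
        have eJ1 : eps J1 = -1 := eps_i1 m hm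
        have sJ0 : sig J0 = J1 := sig_i0 m hm
        have sJ1 : sig J1 = J0 := sig_i1 m hm
        have neJ0I0 : J0 ≠ I0 := ne_of_val_ne' (by omega)
        have neJ0I1 : J0 ≠ I1 := ne_of_val_ne' (by omega)
        have neJ1I0 : J1 ≠ I0 := ne_of_val_ne' (by omega)
        have neJ1I1 : J1 ≠ I1 := ne_of_val_ne' (by omega)
        have neJ0J1 : J0 ≠ J1 := ne_of_val_ne' (by omega)
        set p := x J0 with hp
        set q := x J1 with hq
        set g : ℤ := (Int.gcd p q : ℤ) with hg
        obtain ⟨p', hp'⟩ : g ∣ p := (Int.gcd_dvd_left _ _)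
        obtain ⟨q', hq'⟩ : g ∣ q := (Int.gcd_dvd_right _ _)
        set v : V r := (-g) • Pi.single I0 (1:ℤ) + (-p') • Pi.single J0 (1:ℤ)
            + (-q') • Pi.single J1 (1:ℤ)
          with hv
        have hvap : ∀ j, v j = (-g) * ((Pi.single I0 (1:ℤ) : V r) j)
            + (-p') * ((Pi.single J0 (1:ℤ) : V r) j)
            + (-q') * ((Pi.single J1 (1:ℤ) : V r) j) := by
          intro j; rw [hv]; simp
        have hPv : Pk' k hk v := by
          constructor
          · intro j hj
            have n1 : j ≠ I0 := ne_of_val_ne' (by omega)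
            have n2 : j ≠ J0 := ne_of_val_ne' (by omega)
            have n3 : j ≠ J1 := ne_of_val_ne' (by omega)
            rw [hvap j, Pi.single_eq_of_ne n1, Pi.single_eq_of_ne n2, Pi.single_eq_of_ne n3]
            ring
          · rw [hvap I1, Pi.single_eq_of_ne (Ne.symm neI01),
              Pi.single_eq_of_ne (Ne.symm neJ0I1), Pi.single_eq_of_ne (Ne.symm neJ1I1)]
            ring
        have hBv : Bf x v = g := by
          rw [hv, Bf_add_right, Bf_add_right, Bf_smul_right, Bf_smul_right, Bf_smul_right,
            Bf_single_right, Bf_single_right, Bf_single_right, eI0, sI0, eJ0, sJ0, eJ1, sJ1,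
            hpiv, ← hp, ← hq, hp', hq']
          ring
        obtain ⟨x', hr, hx'⟩ := move_gen v hPv 1 x
        have hx'j : ∀ j, x' j = x j + g * v j := by
          intro j; rw [hx' j, hBv, one_mul]
        have hx'J0 : x' J0 = 0 := by
          rw [hx'j J0, hvap J0, Pi.single_eq_of_ne neJ0I0, Pi.single_eq_same,
            Pi.single_eq_of_ne neJ0J1, ← hp, hp']
          ring
        have hx'J1 : x' J1 = 0 := by
          rw [hx'j J1, hvap J1, Pi.single_eq_of_ne neJ1I0, Pi.single_eq_of_ne (Ne.symm neJ0J1),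
            Pi.single_eq_same, ← hq, hq']
          ring
        have hoth : ∀ j, j ≠ I0 → j ≠ J0 → j ≠ J1 → x' j = x j := by
          intro j h1 h2 h3
          rw [hx'j j, hvap j, Pi.single_eq_of_ne h1, Pi.single_eq_of_ne h2,
            Pi.single_eq_of_ne h3]
          ring
        have hr2 := ih x' (by rw [hoth I1 (Ne.symm neI01) (Ne.symm neJ0I1) (Ne.symm neJ1I1)]; exact hpiv)
          (fun j hj => by
            rw [hoth j (ne_of_val_ne' (by omega)) (ne_of_val_ne' (by omega))
              (ne_of_val_ne' (by omega))]
            exact hlow j hj)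
          (fun j hj => by
            by_cases hj0 : j = J0
            · rw [hj0]; exact hx'J0
            by_cases hj1 : j = J1
            · rw [hj1]; exact hx'J1
            rw [hoth j (ne_of_val_ne' (by omega)) hj0 hj1]
            refine hhigh j (by
              have h0 : (j : ℕ) ≠ 2 * m := fun h => hj0 (Fin.ext (by omega))
              have h1 : (j : ℕ) ≠ 2 * m + 1 := fun h => hj1 (Fin.ext (by omega))
              omega))
        exact reach_trans hr hr2

lemma lemB {k : ℕ} (hk : k < r) (b : V r)
    (hlow : ∀ j : Fin (2 * r), (j : ℕ) < 2 * k → b j = 0)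
    (hpiv : b (i1 k hk) = 1) :
    Reach (Pk' k hk) b (Pi.single (i1 k hk) 1) :=
  lemB_aux hk r b hpiv hlow (fun j hj => by have := j.2; omega)

/-! ### Assembly -/

lemma eps_pm (i : Fin (2 * r)) : eps i = 1 ∨ eps i = -1 := by
  unfold eps; split <;> simp

lemma sig_val_lt {k : ℕ} {j : Fin (2 * r)} (h : (j : ℕ) < 2 * k) : ((sig j : Fin (2*r)) : ℕ) < 2 * k := by
  by_cases he : Even (j : ℕ)
  · have hm := Nat.even_iff.mp he
    rw [sig_val_even he]; omega
  · rw [sig_val_odd he]; omega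

lemma om_transpose : (omSp r)ᵀ = -omSp r := by
  ext i j
  rw [Matrix.transpose_apply, Matrix.neg_apply, om_apply, om_apply]
  by_cases h : j = sig i
  · subst h
    rw [if_pos (by rw [sig_sig]), eps_sig]
    simp
  · rw [if_neg h, if_neg, neg_zero]
    intro hc
    exact h (by rw [hc, sig_sig])

lemma symp_Bf {M : Matrix (Fin (2 * r)) (Fin (2 * r)) ℤ}
    (hM : Mᵀ * omSp r * M = omSp r) (x y : V r) :
    Bf (M.mulVec x) (M.mulVec y) = Bf x y := by
  unfold Bf
  rw [Matrix.mulVec_mulVec, Matrix.dotProduct_mulVec]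
  have h1 : (M *ᵥ x) ᵥ* (omSp r * M) = ((omSp r * M)ᵀ * M) *ᵥ x := by
    rw [← Matrix.mulVec_transpose, Matrix.mulVec_mulVec]
  rw [h1]
  have h2 : (omSp r * M)ᵀ * M = -omSp r := by
    rw [Matrix.transpose_mul, om_transpose, Matrix.mul_neg, Matrix.neg_mul, hM]
  rw [h2]
  rw [Matrix.neg_mulVec, neg_dotProduct, dotProduct_comm]
  exact (Bf_skew x y).symm

lemma col_eq_mulVec_single (M : Matrix (Fin (2 * r)) (Fin (2 * r)) ℤ) (j : Fin (2 * r)) :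
    (fun i => M i j) = M.mulVec (Pi.single j 1) := by
  funext i; rw [Matrix.mulVec_single]; simp

lemma col_mul (U M : Matrix (Fin (2 * r)) (Fin (2 * r)) ℤ) (j : Fin (2 * r)) :
    (fun i => (U * M) i j) = U.mulVec (fun i => M i j) := by
  funext i
  simp [Matrix.mul_apply, Matrix.mulVec, dotProduct]

lemma main_aux : ∀ (d k : ℕ), k + d = r →
    ∀ M : Matrix (Fin (2 * r)) (Fin (2 * r)) ℤ,
    Mᵀ * omSp r * M = omSp r →
    (∀ j : Fin (2 * r), (j : ℕ) < 2 * k → (fun i => M i j) = Pi.single j 1) →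
    ∃ L : List (Matrix (Fin (2 * r)) (Fin (2 * r)) ℤ),
      (∀ E ∈ L, IsElemSp r E) ∧ M = L.prod := by
  intro d
  induction d with
  | zero =>
      intro k hkr M _ hcols
      refine ⟨[], by simp, ?_⟩
      simp only [List.prod_nil]
      ext i j
      have h := congrFun (hcols j (by have := j.2; omega)) i
      rw [h, Matrix.one_apply, Pi.single_apply]
  | succ d ih =>
      intro k hkr M hM hcols
      have hk : k < r := by omega
      set I0 := i0 k hk with hI0
      set I1 := i1 k hk with hI1
      have vI0 : (I0 : ℕ) = 2 * k := rfl
      have vI1 : (I1 : ℕ) = 2 * k + 1 := rfl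
      have eI0 : eps I0 = 1 := eps_i0 k hk
      have eI1 : eps I1 = -1 := eps_i1 k hk
      have sI0 : sig I0 = I1 := sig_i0 k hk
      have sI1 : sig I1 = I0 := sig_i1 k hk
      set a : V r := fun i => M i I0 with ha
      set b : V r := fun i => M i I1 with hb
      have hMB : ∀ x y : V r, Bf (M.mulVec x) (M.mulVec y) = Bf x y := symp_Bf hM
      have haM : a = M.mulVec (Pi.single I0 1) := col_eq_mulVec_single M I0
      have hbM : b = M.mulVec (Pi.single I1 1) := col_eq_mulVec_single M I1
      -- B(a, b) = 1
      have hBab : Bf a b = 1 := by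
        rw [haM, hbM, hMB, Bf_single_left, eI0, sI0, Pi.single_eq_same]
        ring
      -- columns below 2k are orthogonal to a and b
      have hlow_gen : ∀ (w : V r) (Iw : Fin (2 * r)), 2 * k ≤ (Iw : ℕ) →
          w = M.mulVec (Pi.single Iw 1) → ∀ j : Fin (2 * r), (j : ℕ) < 2 * k → w j = 0 := by
        intro w Iw hIw hw j hj
        have hsj : ((sig j : Fin (2*r)) : ℕ) < 2 * k := sig_val_lt hj
        have h1 : Bf (fun i => M i (sig j)) w = 0 := by
          rw [col_eq_mulVec_single M (sig j), hw, hMB, Bf_single_left]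
          have : (Pi.single Iw (1:ℤ) : V r) (sig (sig j)) = 0 := by
            rw [sig_sig]
            exact Pi.single_eq_of_ne (ne_of_val_ne' (by omega)) 1
          rw [this, mul_zero]
        rw [hcols (sig j) hsj, Bf_single_left, sig_sig] at h1
        rcases eps_pm (r := r) (sig j) with h | h <;> rw [h] at h1 <;> linarith
      have ha_low : ∀ j : Fin (2 * r), (j : ℕ) < 2 * k → a j = 0 :=
        hlow_gen a I0 (by omega) haM
      have hb_low : ∀ j : Fin (2 * r), (j : ℕ) < 2 * k → b j = 0 :=
        hlow_gen b I1 (by omega) hbM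
      -- gcd of the entries of a is 1
      have hgcd : ∀ dd : ℤ, (∀ j, dd ∣ a j) → dd ∣ 1 := by
        intro dd hdd
        rw [← hBab, Bf_eq_sum]
        exact Finset.dvd_sum (fun i _ => (hdd i).mul_right _)
      -- Lemma A
      have hrA := lemA hk a ha_low hgcd
      obtain ⟨L1, L1', hL1, hL1', hL1v, hL1inv⟩ := reach_lists hrA
      set M1 := L1.prod * M with hM1def
      have hM1col : ∀ j : Fin (2 * r), (fun i => M1 i j) = L1.prod.mulVec (fun i => M i j) :=
        fun j => col_mul L1.prod M j
      have hM1low : ∀ j : Fin (2 * r), (j : ℕ) < 2 * k →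
          (fun i => M1 i j) = Pi.single j 1 := by
        intro j hj
        rw [hM1col j, hcols j hj]
        apply prod_fix hL1
        intro v hv
        rw [Bf_single_left]
        rw [hv (sig j) (sig_val_lt hj), mul_zero]
      have hM1I0 : (fun i => M1 i I0) = Pi.single I0 1 := by
        rw [hM1col I0, ← ha]; exact hL1v
      set b1 : V r := fun i => M1 i I1 with hb1
      have hb1M : b1 = L1.prod.mulVec b := by rw [hb1, hM1col I1, ← hb]
      have hb1piv : b1 I1 = 1 := by
        have h1 : Bf (Pi.single I0 1) b1 = 1 := by
          rw [← hM1I0, hM1col I0, ← ha, hb1M, prod_Bf hL1, hBab]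
        rw [Bf_single_left, eI0, sI0, one_mul] at h1
        exact h1
      have hb1low : ∀ j : Fin (2 * r), (j : ℕ) < 2 * k → b1 j = 0 := by
        intro j hj
        rw [hb1M, prod_coord hL1 (fun v hv => hv j hj), hb_low j hj]
      -- Lemma B
      have hrB := lemB hk b1 hb1low hb1piv
      obtain ⟨L2, L2', hL2, hL2', hL2v, hL2inv⟩ := reach_lists hrB
      set M2 := L2.prod * M1 with hM2def
      have hM2col : ∀ j : Fin (2 * r), (fun i => M2 i j) = L2.prod.mulVec (fun i => M1 i j) :=
        fun j => col_mul L2.prod M1 j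
      have hL2w : ∀ E ∈ L2, ∃ v c, Pk k v ∧ E = Emat v c := by
        intro E hE
        obtain ⟨v, c, hv, hEe⟩ := hL2 E hE
        exact ⟨v, c, hv.1, hEe⟩
      have hM2symp : M2ᵀ * omSp r * M2 = omSp r := by
        rw [hM2def, hM1def]
        exact prod_symp hL2 (prod_symp hL1 hM)
      have hM2cols : ∀ j : Fin (2 * r), (j : ℕ) < 2 * (k + 1) →
          (fun i => M2 i j) = Pi.single j 1 := by
        intro j hj
        by_cases hjl : (j : ℕ) < 2 * k
        · rw [hM2col j, hM1low j hjl]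
          apply prod_fix hL2w
          intro v hv
          rw [Bf_single_left, hv (sig j) (sig_val_lt hjl), mul_zero]
        · have : (j : ℕ) = 2 * k ∨ (j : ℕ) = 2 * k + 1 := by omega
          rcases this with h | h
          · have hj0 : j = I0 := Fin.ext (by omega)
            subst hj0
            rw [hM2col, hM1I0]
            apply prod_fix hL2
            intro v hv
            rw [Bf_single_left, eI0, sI0, hv.2, mul_zero]
          · have hj1 : j = I1 := Fin.ext (by omega)
            subst hj1
            rw [hM2col, ← hb1]
            exact hL2v
      obtain ⟨L3, hL3, hL3eq⟩ := ih (k + 1) (by omega) M2 hM2symp hM2cols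
      -- reconstruct M
      have hMrec : M = L1'.prod * (L2'.prod * L3.prod) := by
        rw [← hL3eq, hM2def, hM1def]
        rw [← Matrix.mul_assoc L2'.prod, hL2inv, Matrix.one_mul]
        rw [← Matrix.mul_assoc L1'.prod, hL1inv, Matrix.one_mul]
      refine ⟨L1' ++ (L2' ++ L3), ?_, ?_⟩
      · intro E hE
        rcases List.mem_append.mp hE with h | h
        · obtain ⟨v, c, _, hEe⟩ := hL1' E h
          exact ⟨v, c, hEe⟩
        · rcases List.mem_append.mp h with h2 | h2
          · obtain ⟨v, c, _, hEe⟩ := hL2' E h2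
            exact ⟨v, c, hEe⟩
          · exact hL3 E h2
      · rw [List.prod_append, List.prod_append]
        exact hMrec

end SpGen

open SpGen in
/-- Every matrix in `Sp_{2r}(ℤ)` is a product of elementary symplectic matrices. -/
theorem stmt9 (r : ℕ) (M : Matrix (Fin (2 * r)) (Fin (2 * r)) ℤ)
    (hM : Mᵀ * omSp r * M = omSp r) :
    ∃ L : List (Matrix (Fin (2 * r)) (Fin (2 * r)) ℤ),
      (∀ E ∈ L, IsElemSp r E) ∧ M = L.prod :=
  main_aux r 0 (by omega) M hM (fun j hj => absurd hj (by omega))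
end

section
/- Let R be a commutative graded ring and let I_d ⊆ R[p_1,…,p_r] be the ideal generated by monomials p_1^{a_1}⋯p_r^{a_r} with Σ i·a_i ≥ d, where p_i has weight i. Then for 0 ≤ r ≤ n one has the inclusions I_{r(n−r)+1} ⊆ (h_{n−r+1},…,h_n) ⊆ I_{n−r+1}, where h_j ∈ R[p_1,…,p_r] is defined by the recurrence h_j = Σ_{i=1}^{r}(−1)^{i+1} p_i h_{j−i}, h_0 = 1. -/
noncomputable section

open MvPolynomial

open Pointwise

/-- `h_j` in the ring `R[p_1,…,p_r]` (where `X i` stands for `p_{i+1}`), defined by the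
recurrence `h_j = ∑_{i=1}^r (−1)^{i+1} p_i h_{j−i}`, `h_0 = 1`. -/
def hR (R : Type*) [CommRing R] (r : ℕ) : ℕ → MvPolynomial (Fin r) R
  | 0 => 1
  | (j + 1) =>
    ∑ i : Fin r, (-1 : MvPolynomial (Fin r) R) ^ (i : ℕ) *
      (X i * if (i : ℕ) ≤ j then hR R r (j - (i : ℕ)) else 0)
  termination_by j => j
  decreasing_by simp_wf <;> omega

/-- The ideal `I_d ⊆ R[p_1,…,p_r]` generated by the monomials `p_1^{a_1} ⋯ p_r^{a_r}` of
weight `∑ i·a_i ≥ d`, where `p_i` has weight `i`. -/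
def wIdeal (R : Type*) [CommRing R] (r d : ℕ) : Ideal (MvPolynomial (Fin r) R) :=
  Ideal.span { q | ∃ a : Fin r →₀ ℕ,
    d ≤ a.sum (fun i k => ((i : ℕ) + 1) * k) ∧ q = monomial a (1 : R) }

section Aux

variable (R : Type*) [CommRing R] (r n : ℕ)

/-- extension of `hR` to integer indices -/
def hzf : ℤ → MvPolynomial (Fin r) R := fun z => if 0 ≤ z then hR R r z.toNat else 0

lemma hR_zero : hR R r 0 = 1 := by rw [hR.eq_1]

lemma hR_succ (j : ℕ) : hR R r (j+1) =
    ∑ i : Fin r, (-1 : MvPolynomial (Fin r) R) ^ (i : ℕ) *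
      (X i * if (i : ℕ) ≤ j then hR R r (j - (i : ℕ)) else 0) := by
  rw [hR.eq_2]

lemma hzf_ofNat (t : ℕ) : hzf R r (t : ℤ) = hR R r t := by
  simp [hzf]

lemma hzf_rec (z : ℤ) (h1 : 1 ≤ z) :
    hzf R r z = ∑ i : Fin r, (-1 : MvPolynomial (Fin r) R) ^ (i : ℕ) *
      (X i * hzf R r (z - ((i : ℕ) + 1))) := by
  obtain ⟨j, rfl⟩ : ∃ j : ℕ, z = (j : ℤ) + 1 := ⟨(z-1).toNat, by omega⟩
  rw [show ((j:ℤ)+1) = ((j+1 : ℕ) : ℤ) by push_cast; ring, hzf_ofNat, hR_succ]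
  refine Finset.sum_congr rfl fun i _ => ?_
  congr 1
  congr 1
  by_cases hij : (i : ℕ) ≤ j
  · rw [if_pos hij, show ((j+1:ℕ):ℤ) - ((i:ℕ)+1) = ((j - (i:ℕ) : ℕ) : ℤ) by push_cast; omega,
      hzf_ofNat]
  · rw [if_neg hij, hzf, if_neg (by push_cast; omega)]

lemma h_mem_J (hrn : r ≤ n) : ∀ t, n - r + 1 ≤ t →
    hR R r t ∈ Ideal.span (hR R r '' Set.Icc (n - r + 1) n) := by
  intro t
  induction t using Nat.strong_induction_on with
  | _ t IH =>
    intro ht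
    by_cases htn : t ≤ n
    · exact Ideal.subset_span ⟨t, ⟨ht, htn⟩, rfl⟩
    · push_neg at htn
      obtain ⟨j, rfl⟩ : ∃ j, t = j + 1 := ⟨t - 1, by omega⟩
      rw [hR_succ]
      refine Ideal.sum_mem _ fun i _ => ?_
      have hij : (i : ℕ) ≤ j := by have := i.isLt; omega
      rw [if_pos hij]
      exact Ideal.mul_mem_left _ _ (Ideal.mul_mem_left _ _
        (IH (j - (i:ℕ)) (by omega) (by have := i.isLt; omega)))

lemma wIdeal_antitone {d d' : ℕ} (h : d' ≤ d) : wIdeal R r d ≤ wIdeal R r d' := by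
  rw [wIdeal, Ideal.span_le]
  rintro q ⟨a, ha, rfl⟩
  exact Ideal.subset_span ⟨a, le_trans h ha, rfl⟩

lemma X_mul_mem {d : ℕ} (i : Fin r) {q : MvPolynomial (Fin r) R} (hq : q ∈ wIdeal R r d) :
    X i * q ∈ wIdeal R r (d + (i : ℕ) + 1) := by
  induction hq using Submodule.span_induction with
  | mem x hx =>
    obtain ⟨a, ha, rfl⟩ := hx
    have : X i * monomial a (1:R) = monomial (a + Finsupp.single i 1) 1 := by
      rw [X, monomial_mul, mul_one, add_comm]
    rw [this]
    refine Ideal.subset_span ⟨a + Finsupp.single i 1, ?_, rfl⟩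
    rw [Finsupp.sum_add_index (by simp) (by intros; ring)]
    rw [Finsupp.sum_single_index (by simp)]
    omega
  | zero => simp
  | add x y _ _ hx hy => rw [mul_add]; exact add_mem hx hy
  | smul c x _ hx => rw [smul_eq_mul, mul_left_comm]; exact Ideal.mul_mem_left _ _ hx

lemma h_mem_wIdeal : ∀ t, hR R r t ∈ wIdeal R r t := by
  intro t
  induction t using Nat.strong_induction_on with
  | _ t IH =>
    match t with
    | 0 =>
      refine Ideal.subset_span ⟨0, by simp, ?_⟩
      simp [hR_zero]
    | (j+1) =>
      rw [hR_succ]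
      refine Ideal.sum_mem _ fun i _ => ?_
      by_cases hij : (i : ℕ) ≤ j
      · rw [if_pos hij]
        refine Ideal.mul_mem_left _ _ ?_
        have := X_mul_mem R r i (IH (j - (i:ℕ)) (by omega))
        rwa [show j - (i:ℕ) + (i:ℕ) + 1 = j + 1 by omega] at this
      · rw [if_neg hij]; simp

/-- the Jacobi-Trudi style matrix has determinant zero when it has more than `r` rows -/
lemma det_vanish (ℓ : ℕ) (hl : r + 1 ≤ ℓ) (μ : Fin ℓ → ℕ)
    (hpos : ∀ i, 1 ≤ μ i) :
    (Matrix.of fun i j : Fin ℓ => hzf R r ((μ j : ℤ) + i - j)).det = 0 := by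
  set M : Matrix (Fin ℓ) (Fin ℓ) (MvPolynomial (Fin r) R) :=
    Matrix.of fun i j : Fin ℓ => hzf R r ((μ j : ℤ) + i - j) with hM
  have hℓ : 0 < ℓ := by omega
  set last : Fin ℓ := ⟨ℓ - 1, by omega⟩ with hlast
  -- the index of the row used by the `k`-th term of the recurrence
  have hemb : ∀ k : Fin r, ℓ - 2 - (k:ℕ) < ℓ := fun k => by omega
  set emb : Fin r → Fin ℓ := fun k => ⟨ℓ - 2 - (k:ℕ), hemb k⟩ with hembdef
  set c : Fin ℓ → MvPolynomial (Fin r) R := fun k =>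
    ∑ i : Fin r, if k = emb i then (-1 : MvPolynomial (Fin r) R)^(i:ℕ) * X i else 0 with hc
  have hrow : M last = ∑ k, c k • M k := by
    have : ∀ k, c k • M k = ∑ i : Fin r,
        (if k = emb i then (-1 : MvPolynomial (Fin r) R)^(i:ℕ) * X i else 0) • M k := by
      intro k; rw [hc]; rw [Finset.sum_smul]
    rw [funext this, Finset.sum_comm]
    have : ∀ i : Fin r, (∑ k : Fin ℓ,
        (if k = emb i then (-1 : MvPolynomial (Fin r) R)^(i:ℕ) * X i else 0) • M k)
        = ((-1 : MvPolynomial (Fin r) R)^(i:ℕ) * X i) • M (emb i) := by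
      intro i
      rw [Finset.sum_eq_single (emb i)]
      · rw [if_pos rfl]
      · intro b _ hb; rw [if_neg hb, zero_smul]
      · intro hb; exact absurd (Finset.mem_univ _) hb
    rw [funext this]
    funext j
    rw [Finset.sum_apply]
    have hz1 : (1:ℤ) ≤ (μ j : ℤ) + last - j := by
      have := hpos j; have := j.isLt
      simp only [hlast]
      push_cast
      omega
    have := hzf_rec R r ((μ j : ℤ) + last - j) hz1
    simp only [hM, Matrix.of_apply]
    rw [this]
    refine Finset.sum_congr rfl fun i _ => ?_
    have hcast : ((emb i : ℕ) : ℤ) = (ℓ : ℤ) - 2 - (i:ℕ) := by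
      simp only [hembdef]
      have := i.isLt
      push_cast
      omega
    have harg : (μ j : ℤ) + last - j - ((i:ℕ)+1) = (μ j : ℤ) + (emb i) - j := by
      rw [hcast]; simp only [hlast]; push_cast; omega
    rw [harg, Pi.smul_apply, smul_eq_mul, mul_assoc]
    rfl
  have hclast : c last = 0 := by
    rw [hc]
    refine Finset.sum_eq_zero fun i _ => ?_
    rw [if_neg]
    intro hcon
    have : ℓ - 1 = ℓ - 2 - (i:ℕ) := congrArg Fin.val hcon
    omega
  calc M.det = (M.updateRow last (∑ k, c k • M k)).det := by rw [← hrow, Matrix.updateRow_eq_self]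
    _ = c last • M.det := Matrix.det_updateRow_sum M last c
    _ = 0 := by rw [hclast, zero_smul]

/-- rearrangement-type inequality -/
lemma sumsq_lt (ℓ : ℕ) (μ : Fin ℓ → ℕ) (hmono : ∀ i j : Fin ℓ, i ≤ j → μ j ≤ μ i)
    (σ : Equiv.Perm (Fin ℓ)) (hσ : σ ≠ 1) :
    ∑ i, (μ i : ℤ)^2 + 1 ≤ ∑ i, ((μ i : ℤ) + (σ i : ℤ) - (i : ℤ))^2 := by
  have key : ∑ i, (μ i : ℤ) * (i : ℤ) ≤ ∑ i, (μ i : ℤ) * (σ i : ℤ) := by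
    have hav : Antivary (fun i : Fin ℓ => (μ i : ℤ)) (fun i : Fin ℓ => (i : ℤ)) := by
      intro i j hij
      simp only at hij ⊢
      have h2 : (i : ℕ) < (j : ℕ) := by exact_mod_cast hij
      exact_mod_cast hmono i j (by omega)
    exact hav.sum_mul_le_sum_mul_comp_perm (σ := σ)
  obtain ⟨i₀, hi₀⟩ : ∃ i, σ i ≠ i := by
    by_contra hcon
    push_neg at hcon
    exact hσ (Equiv.ext hcon)
  have key2 : (1:ℤ) ≤ ∑ i, ((σ i : ℤ) - (i : ℤ))^2 := by
    have h1 : (1:ℤ) ≤ ((σ i₀ : ℤ) - (i₀ : ℤ))^2 := by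
      have : (σ i₀ : ℤ) ≠ (i₀ : ℤ) := by
        intro hcon; exact hi₀ (Fin.ext (by exact_mod_cast hcon))
      have h0 : ((σ i₀ : ℤ) - (i₀ : ℤ)) ≠ 0 := by omega
      have h2 := sq_pos_of_ne_zero h0
      omega
    calc (1:ℤ) ≤ ((σ i₀ : ℤ) - (i₀ : ℤ))^2 := h1
      _ ≤ ∑ i, ((σ i : ℤ) - (i : ℤ))^2 :=
        Finset.single_le_sum (f := fun i : Fin ℓ => ((σ i : ℤ) - (i : ℤ))^2)
          (fun i _ => sq_nonneg _) (Finset.mem_univ i₀)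
  have expand : ∑ i, ((μ i : ℤ) + (σ i : ℤ) - (i : ℤ))^2 =
      ∑ i, (μ i : ℤ)^2 + 2 * (∑ i, (μ i : ℤ) * (σ i : ℤ) - ∑ i, (μ i : ℤ) * (i:ℤ))
      + ∑ i, ((σ i : ℤ) - (i : ℤ))^2 := by
    have hterm : ∀ i : Fin ℓ, ((μ i : ℤ) + (σ i : ℤ) - (i : ℤ))^2 =
        (μ i : ℤ)^2 + 2*((μ i : ℤ) * (σ i : ℤ) - (μ i : ℤ) * (i : ℤ))
        + ((σ i : ℤ) - (i : ℤ))^2 := fun i => by ring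
    rw [Finset.sum_congr rfl fun i _ => hterm i, Finset.sum_add_distrib,
      Finset.sum_add_distrib, ← Finset.mul_sum, Finset.sum_sub_distrib]
  linarith

/-- enumerate a multiset product by the (reverse-)sorted list -/
lemma prod_sort_fin {M : Type*} [CommMonoid M] (f : ℕ → M) (ν : Multiset ℕ) :
    (ν.map f).prod = ∏ i : Fin (Multiset.sort ν (· ≤ ·)).length,
      f ((Multiset.sort ν (· ≤ ·)).get i.rev) := by
  set L := Multiset.sort ν (· ≤ ·) with hL
  have h1 : ∏ i : Fin L.length, f (L.get i.rev) = ∏ i : Fin L.length, f (L.get i) :=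
    Equiv.prod_comp Fin.revPerm (fun i => f (L.get i))
  rw [h1, ← List.prod_ofFn]; simp only [List.get_eq_getElem, List.ofFn_getElem_eq_map]
  conv_lhs => rw [← Multiset.sort_eq ν (· ≤ ·)]
  rw [Multiset.map_coe, Multiset.prod_coe]

lemma sum_sort_fin {M : Type*} [AddCommMonoid M] (f : ℕ → M) (ν : Multiset ℕ) :
    (ν.map f).sum = ∑ i : Fin (Multiset.sort ν (· ≤ ·)).length,
      f ((Multiset.sort ν (· ≤ ·)).get i.rev) := by
  set L := Multiset.sort ν (· ≤ ·) with hL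
  have h1 : ∑ i : Fin L.length, f (L.get i.rev) = ∑ i : Fin L.length, f (L.get i) :=
    Equiv.sum_comp Fin.revPerm (fun i => f (L.get i))
  rw [h1, ← List.sum_ofFn]; simp only [List.get_eq_getElem, List.ofFn_getElem_eq_map]
  conv_lhs => rw [← Multiset.sort_eq ν (· ≤ ·)]
  rw [Multiset.map_coe, Multiset.sum_coe]

lemma msq (ν : Multiset ℕ) (hpos : ∀ x ∈ ν, 0 < x) :
    (ν.map (fun x => x^2)).sum + Multiset.card ν ≤ ν.sum ^ 2 + 1 := by
  induction ν using Multiset.induction with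
  | empty => simp
  | cons a s IH =>
    have ha : 0 < a := hpos a (Multiset.mem_cons_self a s)
    have IH' := IH (fun x hx => hpos x (Multiset.mem_cons_of_mem hx))
    by_cases hs : s = 0
    · simp [hs]
    · have hcard : 0 < Multiset.card s := Multiset.card_pos.mpr hs
      have hsum : Multiset.card s ≤ s.sum :=
        le_trans (by simp) (Multiset.card_nsmul_le_sum
          (fun x hx => hpos x (Multiset.mem_cons_of_mem hx)))
      simp only [Multiset.map_cons, Multiset.sum_cons, Multiset.card_cons]
      nlinarith [IH', hsum, ha]

lemma claimH (hrn : r ≤ n) (hr : 1 ≤ r) :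
    ∀ dd : ℕ, ∀ ν : Multiset ℕ, (∀ x ∈ ν, 0 < x) → r * (n - r) < ν.sum →
    ν.sum ^ 2 ≤ (ν.map (fun x => x^2)).sum + dd →
    (ν.map (hR R r)).prod ∈ Ideal.span (hR R r '' Set.Icc (n - r + 1) n) := by
  intro dd
  induction dd with
  | zero =>
    intro ν hpos hsum hmeas
    by_cases hA : ∃ x ∈ ν, n - r + 1 ≤ x
    · obtain ⟨x, hx, hxb⟩ := hA
      rw [← Multiset.cons_erase hx, Multiset.map_cons, Multiset.prod_cons]
      exact Ideal.mul_mem_right _ _ (h_mem_J R r n hrn x hxb)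
    · exfalso
      push_neg at hA
      have hm : 1 ≤ n - r := by
        rcases Nat.eq_zero_or_pos (n - r) with h0 | h1
        · obtain ⟨x, hx⟩ := Multiset.exists_mem_of_ne_zero
            (fun h0 : ν = 0 => by rw [h0] at hsum; simp at hsum)
          have := hA x hx; have := hpos x hx; omega
        · exact h1
      have hcard : r + 1 ≤ Multiset.card ν := by
        have hle : ν.sum ≤ Multiset.card ν * (n - r) := by
          have := Multiset.sum_le_card_nsmul ν (n - r) (fun x hx => by have := hA x hx; omega)
          simpa [smul_eq_mul] using this
        by_contra hcon
        push_neg at hcon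
        have hmul : Multiset.card ν * (n - r) ≤ r * (n - r) :=
          Nat.mul_le_mul_right _ (by omega)
        linarith
      have := msq ν hpos
      linarith
  | succ dd IH =>
    intro ν hpos hsum hmeas
    by_cases hA : ∃ x ∈ ν, n - r + 1 ≤ x
    · obtain ⟨x, hx, hxb⟩ := hA
      rw [← Multiset.cons_erase hx, Multiset.map_cons, Multiset.prod_cons]
      exact Ideal.mul_mem_right _ _ (h_mem_J R r n hrn x hxb)
    · push_neg at hA
      set J := Ideal.span (hR R r '' Set.Icc (n - r + 1) n) with hJ
      set L := Multiset.sort ν (· ≤ ·) with hLdef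
      set ℓ := L.length with hldef
      set μ : Fin ℓ → ℕ := fun i => L.get i.rev with hμdef
      have hμmem : ∀ i, μ i ∈ ν := fun i =>
        (Multiset.mem_sort (fun x1 x2 => x1 ≤ x2)).mp (L.get_mem _)
      have hμpos : ∀ i, 1 ≤ μ i := fun i => hpos _ (hμmem i)
      have hmono : ∀ i j : Fin ℓ, i ≤ j → μ j ≤ μ i := by
        intro i j hij
        rcases eq_or_lt_of_le hij with rfl | hlt
        · exact le_refl _
        · exact (Multiset.pairwise_sort ν (· ≤ ·)).rel_get_of_lt (Fin.rev_lt_rev.mpr hlt)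
      -- cardinality bound
      have hm : 1 ≤ n - r := by
        rcases Nat.eq_zero_or_pos (n - r) with h0 | h1
        · obtain ⟨x, hx⟩ := Multiset.exists_mem_of_ne_zero
            (fun h0 : ν = 0 => by rw [h0] at hsum; simp at hsum)
          have := hA x hx; have := hpos x hx; omega
        · exact h1
      have hcard : r + 1 ≤ ℓ := by
        have hlc : ℓ = Multiset.card ν := Multiset.length_sort _
        have hle : ν.sum ≤ Multiset.card ν * (n - r) := by
          have := Multiset.sum_le_card_nsmul ν (n - r) (fun x hx => by have := hA x hx; omega)
          simpa [smul_eq_mul] using this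
        by_contra hcon
        push_neg at hcon
        have hmul : Multiset.card ν * (n - r) ≤ r * (n - r) :=
          Nat.mul_le_mul_right _ (by omega)
        have hlc2 : ℓ = Multiset.card ν := hlc
        linarith
      -- sums and products over the sorted enumeration
      have hprodν : (ν.map (hR R r)).prod = ∏ i : Fin ℓ, hR R r (μ i) := prod_sort_fin _ ν
      have hsumν : ν.sum = ∑ i : Fin ℓ, μ i := by
        have h := sum_sort_fin (id : ℕ → ℕ) ν
        rw [Multiset.map_id] at h
        exact h
      have hsqν : (ν.map (fun x => x^2)).sum = ∑ i : Fin ℓ, (μ i)^2 :=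
        sum_sort_fin (fun x => x^2) ν
      -- the determinant identity
      have hdet := det_vanish R r ℓ hcard μ hμpos
      rw [Matrix.det_apply] at hdet
      simp only [Matrix.of_apply] at hdet
      rw [← Finset.add_sum_erase _ _ (Finset.mem_univ (1 : Equiv.Perm (Fin ℓ)))] at hdet
      have hone : (Equiv.Perm.sign (1 : Equiv.Perm (Fin ℓ))) •
          (∏ i : Fin ℓ, hzf R r ((μ i : ℤ) + ((1 : Equiv.Perm (Fin ℓ)) i : ℤ) - (i : ℤ)))
          = ∏ i : Fin ℓ, hR R r (μ i) := by
        rw [Equiv.Perm.sign_one, one_smul]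
        refine Finset.prod_congr rfl fun i _ => ?_
        rw [Equiv.Perm.one_apply, add_sub_cancel_right, hzf_ofNat]
      rw [hone] at hdet
      have hkey : (∏ i : Fin ℓ, hR R r (μ i)) =
          - ∑ σ ∈ Finset.univ.erase (1 : Equiv.Perm (Fin ℓ)),
            Equiv.Perm.sign σ • ∏ i : Fin ℓ, hzf R r ((μ i : ℤ) + (σ i : ℤ) - (i : ℤ)) := by
        linear_combination hdet
      rw [hprodν, hkey]
      refine neg_mem (Ideal.sum_mem _ fun σ hσ => ?_)
      have hσ1 : σ ≠ 1 := (Finset.mem_erase.mp hσ).1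
      rw [Units.smul_def, zsmul_eq_mul]
      refine Ideal.mul_mem_left _ _ ?_
      by_cases hneg : ∃ i : Fin ℓ, ((μ i : ℤ) + (σ i : ℤ) - (i : ℤ)) < 0
      · obtain ⟨i, hi⟩ := hneg
        rw [Finset.prod_eq_zero (Finset.mem_univ i)
          (by simp only [hzf]; rw [if_neg (by omega)])]
        exact zero_mem _
      · push_neg at hneg
        set w : Fin ℓ → ℕ := fun i => ((μ i : ℤ) + (σ i : ℤ) - (i : ℤ)).toNat with hwdef
        have hw : ∀ i, (w i : ℤ) = (μ i : ℤ) + (σ i : ℤ) - (i : ℤ) := fun i =>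
          Int.toNat_of_nonneg (hneg i)
        have hprodw : (∏ i : Fin ℓ, hzf R r ((μ i : ℤ) + (σ i : ℤ) - (i : ℤ)))
            = ∏ i : Fin ℓ, hR R r (w i) := by
          refine Finset.prod_congr rfl fun i _ => ?_
          rw [← hw i, hzf_ofNat]
        rw [hprodw]
        set νf : Multiset ℕ := Multiset.map w Finset.univ.val with hνf
        set ν' : Multiset ℕ := νf.filter (fun x => 0 < x) with hν'
        have hsplit : νf = ν' + νf.filter (fun x => ¬ 0 < x) := (Multiset.filter_add_not _ _).symm
        -- the product over `ν'` is the full product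
        have hprod' : (ν'.map (hR R r)).prod = ∏ i : Fin ℓ, hR R r (w i) := by
          have h1 : ∏ i : Fin ℓ, hR R r (w i) = (νf.map (hR R r)).prod := by
            rw [Finset.prod_eq_multiset_prod]
            rw [hνf, Multiset.map_map]
            rfl
          rw [h1, hsplit, Multiset.map_add, Multiset.prod_add]
          have h2 : ((νf.filter (fun x => ¬ 0 < x)).map (hR R r)).prod = 1 := by
            refine Multiset.prod_eq_one fun x hx => ?_
            obtain ⟨y, hy, rfl⟩ := Multiset.mem_map.mp hx
            have : y = 0 := by have := (Multiset.mem_filter.mp hy).2; omega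
            rw [this, hR_zero]
          rw [h2, mul_one]
      -- sums
        have hsum_eq : ∑ i : Fin ℓ, (w i : ℤ) = ∑ i : Fin ℓ, (μ i : ℤ) := by
          have h3 : ∑ i : Fin ℓ, ((σ i : ℕ) : ℤ) = ∑ i : Fin ℓ, ((i : ℕ) : ℤ) :=
            Equiv.sum_comp σ (fun i : Fin ℓ => ((i : ℕ) : ℤ))
          calc ∑ i : Fin ℓ, (w i : ℤ) = ∑ i : Fin ℓ, ((μ i : ℤ) + (σ i : ℤ) - (i : ℤ)) :=
                Finset.sum_congr rfl fun i _ => hw i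
            _ = ∑ i : Fin ℓ, (μ i : ℤ) := by
                rw [Finset.sum_sub_distrib, Finset.sum_add_distrib, h3]; ring
        have hνfsum : νf.sum = ∑ i : Fin ℓ, w i :=
          (Finset.sum_eq_multiset_sum _ w).symm
        have hν'sum : ν'.sum = νf.sum := by
          conv_rhs => rw [hsplit]
          rw [Multiset.sum_add]
          have : (νf.filter (fun x => ¬ 0 < x)).sum = 0 :=
            Multiset.sum_eq_zero fun x hx => by
              have := (Multiset.mem_filter.mp hx).2; omega
          rw [this, add_zero]
        have hν'sum2 : ν'.sum = ν.sum := by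
          have : (ν'.sum : ℤ) = (ν.sum : ℤ) := by
            rw [hν'sum, hνfsum, hsumν]
            push_cast
            rw [hsum_eq]
          exact_mod_cast this
        -- squares
        have hνfsq : (νf.map (fun x => x^2)).sum = ∑ i : Fin ℓ, (w i)^2 := by
          rw [Finset.sum_eq_multiset_sum, hνf, Multiset.map_map]
          rfl
        have hν'sq : (ν'.map (fun x => x^2)).sum = (νf.map (fun x => x^2)).sum := by
          conv_rhs => rw [hsplit]
          rw [Multiset.map_add, Multiset.sum_add]
          have : ((νf.filter (fun x => ¬ 0 < x)).map (fun x => x^2)).sum = 0 :=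
            Multiset.sum_eq_zero fun x hx => by
              obtain ⟨y, hy, rfl⟩ := Multiset.mem_map.mp hx
              have : y = 0 := by have := (Multiset.mem_filter.mp hy).2; omega
              simp [this]
          rw [this, add_zero]
        have hsq_ge : ∑ i : Fin ℓ, (μ i)^2 + 1 ≤ ∑ i : Fin ℓ, (w i)^2 := by
          have hc : ∑ i : Fin ℓ, ((w i : ℤ))^2 = ∑ i : Fin ℓ, ((μ i : ℤ) + (σ i : ℤ) - (i : ℤ))^2 :=
            Finset.sum_congr rfl fun i _ => by rw [hw i]
          have h2 : (∑ i : Fin ℓ, (μ i : ℤ)^2) + 1 ≤ ∑ i : Fin ℓ, ((w i : ℤ))^2 := by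
            rw [hc]; exact sumsq_lt ℓ μ hmono σ hσ1
          exact_mod_cast h2
        -- apply the induction hypothesis
        rw [← hprod']
        refine IH ν' (fun x hx => (Multiset.mem_filter.mp hx).2) ?_ ?_
        · rw [hν'sum2]; exact hsum
        · rw [hν'sum2, hν'sq, hνfsq, hsumν]
          rw [hsumν] at hmeas
          rw [hsqν] at hmeas
          linarith
/-- `X` with junk values -/
def Xe (k : ℕ) : MvPolynomial (Fin r) R := if hk : k < r then X ⟨k, hk⟩ else 0

/-- the elementary symmetric polynomials, recovered from the `h`'s -/
def Erec (R : Type*) [CommRing R] (r : ℕ) : ℕ → MvPolynomial (Fin r) R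
  | 0 => 1
  | (i + 1) => ∑ j ∈ Finset.range (i+1),
      (-1 : MvPolynomial (Fin r) R) ^ j * (hR R r (j+1) * Erec R r (i - j))
  termination_by i => i
  decreasing_by simp_wf <;> omega

lemma Erec_zero : Erec R r 0 = 1 := by rw [Erec.eq_1]

lemma Erec_succ (i : ℕ) : Erec R r (i+1) = ∑ j ∈ Finset.range (i+1),
    (-1 : MvPolynomial (Fin r) R) ^ j * (hR R r (j+1) * Erec R r (i - j)) := by
  rw [Erec.eq_2]

lemma hpow : ∀ a b : ℕ, a % 2 = b % 2 →
    (-1 : MvPolynomial (Fin r) R)^a = (-1)^b := by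
  intro a b hab
  rw [neg_one_pow_eq_pow_mod_two, hab, ← neg_one_pow_eq_pow_mod_two]

/-- the recurrence for `h`, rewritten over `Finset.range` with `Xe` -/
lemma hrec_range (i : ℕ) (hi : i < r) : hR R r (i+1) = ∑ k ∈ Finset.range (i+1),
    (-1 : MvPolynomial (Fin r) R)^k * (Xe R r k * hR R r (i-k)) := by
  rw [hR_succ]
  have step1 : ∀ k : Fin r, (-1 : MvPolynomial (Fin r) R) ^ (k : ℕ) *
      (X k * if (k : ℕ) ≤ i then hR R r (i - (k : ℕ)) else 0) =
      (fun k : ℕ => (-1 : MvPolynomial (Fin r) R)^k *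
        (Xe R r k * if k ≤ i then hR R r (i-k) else 0)) (k : ℕ) := by
    intro k
    simp only [Xe, k.isLt, dif_pos, Fin.eta]
  rw [Finset.sum_congr rfl fun k _ => step1 k,
    Fin.sum_univ_eq_sum_range (fun k : ℕ => (-1 : MvPolynomial (Fin r) R)^k *
      (Xe R r k * if k ≤ i then hR R r (i-k) else 0)) r]
  rw [← Finset.sum_subset (Finset.range_subset_range.mpr (by omega : i + 1 ≤ r))
    (fun k _ hk => by rw [if_neg (by simp at hk ⊢; omega), mul_zero, mul_zero])]
  exact Finset.sum_congr rfl fun k hk => by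
    rw [if_pos (by simp at hk; omega)]

lemma Erec_eq : ∀ i, i < r → Erec R r (i+1) = Xe R r i := by
  intro i
  induction i using Nat.strong_induction_on with
  | _ i IH =>
    intro hi
    rw [Erec_succ, Finset.sum_range_succ, Nat.sub_self, Erec_zero, mul_one]
    have hterm : ∀ j ∈ Finset.range i, (-1 : MvPolynomial (Fin r) R)^j *
        (hR R r (j+1) * Erec R r (i - j)) =
        (fun j => (-1 : MvPolynomial (Fin r) R)^j * (hR R r (j+1) * Xe R r (i - 1 - j))) j := by
      intro j hj
      have hj' : j < i := Finset.mem_range.mp hj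
      have h1 : i - j = (i - 1 - j) + 1 := by omega
      rw [h1, IH (i-1-j) (by omega) (by omega)]
    rw [Finset.sum_congr rfl hterm]
    rw [hrec_range R r i hi, Finset.sum_range_succ, Nat.sub_self, hR_zero, mul_one, mul_add]
    have h2 : (-1 : MvPolynomial (Fin r) R)^i * ((-1)^i * Xe R r i) = Xe R r i := by
      rw [← mul_assoc, ← pow_add, hpow R r (i+i) 0 (by omega), pow_zero, one_mul]
    rw [h2]
    have hS : ∑ j ∈ Finset.range i,
        (fun j => (-1 : MvPolynomial (Fin r) R)^j * (hR R r (j+1) * Xe R r (i - 1 - j))) j =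
        - ((-1 : MvPolynomial (Fin r) R)^i * ∑ k ∈ Finset.range i,
          (-1 : MvPolynomial (Fin r) R)^k * (Xe R r k * hR R r (i-k))) := by
      rw [← Finset.sum_range_reflect]
      rw [Finset.mul_sum, ← Finset.sum_neg_distrib]
      refine Finset.sum_congr rfl fun j hj => ?_
      have hj' : j < i := Finset.mem_range.mp hj
      rw [show i - 1 - j + 1 = i - j by omega, show i - 1 - (i - 1 - j) = j by omega]
      rw [hpow R r (i-1-j) (i+j+1) (by omega)]
      have h3 : (-1 : MvPolynomial (Fin r) R)^(i+j+1) = (-1)^i * (-1)^j * (-1) := by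
        rw [pow_add, pow_add, pow_one]
      rw [h3]
      ring
    rw [hS]
    ring

/-- set of products of `h`'s with positive indices of total weight `w` -/
def HMset (w : ℕ) : Set (MvPolynomial (Fin r) R) :=
  { q | ∃ ν : Multiset ℕ, (∀ x ∈ ν, 0 < x) ∧ ν.sum = w ∧ q = (ν.map (hR R r)).prod }

lemma one_mem_HM : (1 : MvPolynomial (Fin r) R) ∈ HMset R r 0 :=
  ⟨0, by simp, by simp, by simp⟩

lemma h_mem_HM (t : ℕ) (ht : 0 < t) : hR R r t ∈ HMset R r t :=
  ⟨{t}, by simpa using ht, by simp, by simp⟩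

lemma HM_mul_subset (w w' : ℕ) : HMset R r w * HMset R r w' ⊆ HMset R r (w + w') := by
  rintro x ⟨a, ⟨ν, hν, hνs, rfl⟩, b, ⟨ν', hν', hνs', rfl⟩, rfl⟩
  refine ⟨ν + ν', fun x hx => ?_, by rw [Multiset.sum_add, hνs, hνs'],
    by rw [Multiset.map_add, Multiset.prod_add]⟩
  rcases Multiset.mem_add.mp hx with h | h
  · exact hν x h
  · exact hν' x h

lemma HM_mul {w w' : ℕ} {a b : MvPolynomial (Fin r) R}
    (ha : a ∈ Submodule.span ℤ (HMset R r w)) (hb : b ∈ Submodule.span ℤ (HMset R r w')) :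
    a * b ∈ Submodule.span ℤ (HMset R r (w + w')) := by
  have h1 := Submodule.mul_mem_mul ha hb
  rw [Submodule.span_mul_span] at h1
  exact Submodule.span_mono (HM_mul_subset R r w w') h1

lemma neg_pow_mul_mem {s : Set (MvPolynomial (Fin r) R)} {x : MvPolynomial (Fin r) R} (j : ℕ)
    (hx : x ∈ Submodule.span ℤ s) :
    (-1 : MvPolynomial (Fin r) R)^j * x ∈ Submodule.span ℤ s := by
  rcases Nat.even_or_odd j with he | ho
  · rw [he.neg_one_pow, one_mul]; exact hx
  · rw [ho.neg_one_pow, neg_one_mul]; exact neg_mem hx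

lemma Erec_mem : ∀ t, Erec R r t ∈ Submodule.span ℤ (HMset R r t) := by
  intro t
  induction t using Nat.strong_induction_on with
  | _ t IH =>
    match t with
    | 0 =>
      rw [Erec_zero]
      exact Submodule.subset_span (one_mem_HM R r)
    | (i+1) =>
      rw [Erec_succ]
      refine Submodule.sum_mem _ fun j hj => ?_
      have hj' : j ≤ i := by have := Finset.mem_range.mp hj; omega
      refine neg_pow_mul_mem R r j ?_
      have h1 : hR R r (j+1) ∈ Submodule.span ℤ (HMset R r (j+1)) :=
        Submodule.subset_span (h_mem_HM R r (j+1) (by omega))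
      have h2 := IH (i - j) (by omega)
      have h3 := HM_mul R r h1 h2
      rwa [show j + 1 + (i - j) = i + 1 by omega] at h3

lemma X_mem (i : Fin r) :
    (X i : MvPolynomial (Fin r) R) ∈ Submodule.span ℤ (HMset R r ((i : ℕ) + 1)) := by
  have h1 := Erec_eq R r (i : ℕ) i.isLt
  have h2 : Xe R r (i : ℕ) = X i := by simp [Xe]
  rw [← h2, ← h1]
  exact Erec_mem R r _

lemma Xpow_mem (i : Fin r) (k : ℕ) :
    (X i : MvPolynomial (Fin r) R) ^ k ∈ Submodule.span ℤ (HMset R r (((i : ℕ) + 1) * k)) := by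
  induction k with
  | zero =>
    rw [pow_zero, Nat.mul_zero]
    exact Submodule.subset_span (one_mem_HM R r)
  | succ k IH =>
    rw [pow_succ]
    have := HM_mul R r IH (X_mem R r i)
    rwa [show ((i : ℕ)+1)*k + ((i : ℕ)+1) = ((i : ℕ)+1)*(k+1) by ring] at this

lemma prod_mem_HM (s : Finset (Fin r)) (g : Fin r → ℕ) :
    (∏ i ∈ s, (X i : MvPolynomial (Fin r) R) ^ g i) ∈
      Submodule.span ℤ (HMset R r (∑ i ∈ s, ((i : ℕ) + 1) * g i)) := by
  classical
  induction s using Finset.induction_on with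
  | empty =>
    rw [Finset.prod_empty, Finset.sum_empty]
    exact Submodule.subset_span (one_mem_HM R r)
  | insert _ _ hx IH =>
    rw [Finset.prod_insert hx, Finset.sum_insert hx]
    exact HM_mul R r (Xpow_mem R r _ _) IH

lemma monomial_mem_HM (a : Fin r →₀ ℕ) :
    (monomial a (1 : R) : MvPolynomial (Fin r) R) ∈
      Submodule.span ℤ (HMset R r (a.sum fun i k => ((i : ℕ) + 1) * k)) := by
  rw [monomial_eq, map_one, one_mul]
  have h1 : (a.prod fun i k => (X i : MvPolynomial (Fin r) R) ^ k) =
      ∏ i ∈ a.support, (X i : MvPolynomial (Fin r) R) ^ a i := rfl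
  have h2 : (a.sum fun i k => ((i : ℕ) + 1) * k) = ∑ i ∈ a.support, ((i : ℕ) + 1) * a i := rfl
  rw [h1, h2]
  exact prod_mem_HM R r a.support (fun i => a i)

lemma HM_sub_J (hrn : r ≤ n) (hr : 1 ≤ r) (w : ℕ) (hw : r * (n - r) < w) :
    HMset R r w ⊆ (Ideal.span (hR R r '' Set.Icc (n - r + 1) n) : Set (MvPolynomial (Fin r) R)) := by
  rintro q ⟨ν, hpos, hsums, rfl⟩
  exact claimH R r n hrn hr (ν.sum ^ 2) ν hpos (by omega) (Nat.le_add_left _ _)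

end Aux

/-- The inclusions `I_{r(n−r)+1} ⊆ (h_{n−r+1},…,h_n) ⊆ I_{n−r+1}`. -/
theorem stmt14 (R : Type*) [CommRing R] (r n : ℕ) (hrn : r ≤ n) :
    wIdeal R r (r * (n - r) + 1) ≤ Ideal.span (hR R r '' Set.Icc (n - r + 1) n) ∧
    Ideal.span (hR R r '' Set.Icc (n - r + 1) n) ≤ wIdeal R r (n - r + 1) := by
  constructor
  · rcases Nat.eq_zero_or_pos r with rfl | hr
    · rw [wIdeal, Ideal.span_le]
      rintro q ⟨a, ha, rfl⟩
      exfalso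
      have hsupp : a.support = ∅ := Finset.eq_empty_of_isEmpty _
      rw [Finsupp.sum, hsupp] at ha
      simp at ha
    · rw [wIdeal, Ideal.span_le]
      rintro q ⟨a, ha, rfl⟩
      have h1 := monomial_mem_HM R r a
      have h2 : Submodule.span ℤ (HMset R r (a.sum fun i k => ((i : ℕ) + 1) * k)) ≤
          (Ideal.span (hR R r '' Set.Icc (n - r + 1) n)).restrictScalars ℤ :=
        Submodule.span_le.mpr (HM_sub_J R r n hrn hr _ (by omega))
      exact h2 h1
  · rw [Ideal.span_le]
    rintro q ⟨t, ⟨ht1, ht2⟩, rfl⟩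
    exact wIdeal_antitone R r ht1 (h_mem_wIdeal R r t)

end
end

section
/- Let R be a commutative ring. The ring homomorphism R[[p_1,…,p_{r+s}]] → R[[p'_1,…,p'_r, p''_1,…,p''_s]] determined by the Cartan formula p_i ↦ p'_i + Σ_{j=1}^{i−1} p'_{i−j} p''_j + p''_i (with p'_k = 0 for k > r and p''_k = 0 for k > s) is injective. -/
noncomputable section

open MvPolynomial

/-- `p'_k` in `R[p'_1,…,p'_r, p''_1,…,p''_s]`, with `p'_0 = 1` and `p'_k = 0` for `k > r`. -/
def pOne (R : Type*) [CommRing R] (r s : ℕ) (k : ℕ) : MvPolynomial (Fin r ⊕ Fin s) R :=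
  if k = 0 then 1
  else if h : k - 1 < r then X (Sum.inl ⟨k - 1, h⟩) else 0

/-- `p''_k` in `R[p'_1,…,p'_r, p''_1,…,p''_s]`, with `p''_0 = 1` and `p''_k = 0` for `k > s`. -/
def pTwo (R : Type*) [CommRing R] (r s : ℕ) (k : ℕ) : MvPolynomial (Fin r ⊕ Fin s) R :=
  if k = 0 then 1
  else if h : k - 1 < s then X (Sum.inr ⟨k - 1, h⟩) else 0

/-- The Cartan polynomial: the image of `p_{i+1}`, namely
`∑_{j=0}^{i+1} p'_{i+1−j} p''_j = p'_{i+1} + ∑_{j=1}^{i} p'_{i+1−j} p''_j + p''_{i+1}`. -/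
def cartan (R : Type*) [CommRing R] (r s : ℕ) (i : Fin (r + s)) :
    MvPolynomial (Fin r ⊕ Fin s) R :=
  ∑ j ∈ Finset.range ((i : ℕ) + 2), pOne R r s ((i : ℕ) + 1 - j) * pTwo R r s j

/-- The weight of an exponent in the target variables (`p'_i` and `p''_i` have weight `i`). -/
def wtCod (r s : ℕ) (e : (Fin r ⊕ Fin s) →₀ ℕ) : ℕ :=
  e.sum fun x k => (Sum.elim (fun j : Fin r => (j : ℕ) + 1) (fun j : Fin s => (j : ℕ) + 1) x) * k

/-- A bound on the exponents of the source that can contribute to a given target exponent. -/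
def bnd (r s : ℕ) (e : (Fin r ⊕ Fin s) →₀ ℕ) : Fin (r + s) →₀ ℕ :=
  Finsupp.equivFunOnFinite.symm fun _ => wtCod r s e

lemma esymm_zero' {A : Type*} [CommSemiring A] (s : Multiset A) : s.esymm 0 = 1 := by
  simp [Multiset.esymm, Multiset.powersetCard_zero_left]

lemma esymm_of_lt {A : Type*} [CommSemiring A] {s : Multiset A} {n : ℕ}
    (h : Multiset.card s < n) : s.esymm n = 0 := by
  simp [Multiset.esymm, Multiset.powersetCard_eq_empty _ h]

lemma esymm_cons {A : Type*} [CommSemiring A] (a : A) (s : Multiset A) (n : ℕ) :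
    (a ::ₘ s).esymm (n + 1) = s.esymm (n + 1) + a * s.esymm n := by
  simp [Multiset.esymm, Multiset.powersetCard_cons, Multiset.map_map, Function.comp,
    Multiset.sum_map_mul_left]

lemma esymm_conv {A : Type*} [CommSemiring A] (s t : Multiset A) (n : ℕ) :
    (s + t).esymm n = ∑ j ∈ Finset.range (n + 1), s.esymm (n - j) * t.esymm j := by
  induction s using Multiset.induction generalizing n with
  | empty =>
    rw [zero_add, Finset.sum_eq_single n]
    · simp [esymm_zero']
    · intro j hj hne
      rw [Finset.mem_range] at hj
      rw [esymm_of_lt (s := (0 : Multiset A)) (by simp; omega), zero_mul]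
    · intro h; exact absurd (Finset.self_mem_range_succ n) h
  | cons a s ih =>
    cases n with
    | zero => simp [esymm_zero']
    | succ m =>
      rw [Multiset.cons_add, esymm_cons, ih, ih]
      have key : ∀ j ∈ Finset.range (m + 1), (a ::ₘ s).esymm (m + 1 - j) * t.esymm j
          = s.esymm (m + 1 - j) * t.esymm j + a * (s.esymm (m - j) * t.esymm j) := by
        intro j hj
        rw [Finset.mem_range] at hj
        have h1 : m + 1 - j = (m - j) + 1 := by omega
        rw [h1, esymm_cons]
        ring
      rw [Finset.sum_range_succ, Finset.sum_range_succ
        (f := fun j => (a ::ₘ s).esymm (m + 1 - j) * t.esymm j),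
        Finset.sum_congr rfl key, Finset.sum_add_distrib, ← Finset.mul_sum]
      simp only [Nat.sub_self, esymm_zero', one_mul]
      ring

namespace Stmt16Aux

variable (R : Type*) [CommRing R] (r s : ℕ)

def wt : Fin r ⊕ Fin s → ℕ := Sum.elim (fun j => (j : ℕ) + 1) (fun j => (j : ℕ) + 1)

lemma wtCod_eq (e : (Fin r ⊕ Fin s) →₀ ℕ) :
    wtCod r s e = Finsupp.weight (wt r s) e := by
  rw [Finsupp.weight_apply, wtCod]
  refine Finsupp.sum_congr fun x _ => ?_
  rw [smul_eq_mul, mul_comm]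
  rfl

lemma pOne_hom (k : ℕ) : IsWeightedHomogeneous (wt r s) (pOne R r s k) k := by
  unfold pOne
  split_ifs with h0 h1
  · subst h0; exact isWeightedHomogeneous_one R _
  · have h := isWeightedHomogeneous_X R (wt r s) (Sum.inl (⟨k - 1, h1⟩ : Fin r))
    convert h using 1
    simp only [wt, Sum.elim_inl]
    omega
  · exact isWeightedHomogeneous_zero R _ _

lemma pTwo_hom (k : ℕ) : IsWeightedHomogeneous (wt r s) (pTwo R r s k) k := by
  unfold pTwo
  split_ifs with h0 h1
  · subst h0; exact isWeightedHomogeneous_one R _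
  · have h := isWeightedHomogeneous_X R (wt r s) (Sum.inr (⟨k - 1, h1⟩ : Fin s))
    convert h using 1
    simp only [wt, Sum.elim_inr]
    omega
  · exact isWeightedHomogeneous_zero R _ _

lemma cartan_hom (i : Fin (r + s)) :
    IsWeightedHomogeneous (wt r s) (cartan R r s i) ((i : ℕ) + 1) := by
  unfold cartan
  apply IsWeightedHomogeneous.sum
  intro j hj
  rw [Finset.mem_range] at hj
  convert (pOne_hom R r s ((i : ℕ) + 1 - j)).mul (pTwo_hom R r s j) using 1
  omega

lemma IsWH_pow {σ : Type*} {w : σ → ℕ} {φ : MvPolynomial σ R} {m : ℕ}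
    (h : IsWeightedHomogeneous w φ m) (k : ℕ) :
    IsWeightedHomogeneous w (φ ^ k) (k * m) := by
  induction k with
  | zero => simpa using isWeightedHomogeneous_one R w
  | succ n ih =>
    rw [pow_succ, Nat.succ_mul]
    exact ih.mul h

def wtsrc : Fin (r + s) → ℕ := fun i => (i : ℕ) + 1

lemma prod_hom (d : Fin (r + s) →₀ ℕ) :
    IsWeightedHomogeneous (wt r s) (∏ i : Fin (r + s), cartan R r s i ^ d i)
      (Finsupp.weight (wtsrc r s) d) := by
  have h : Finsupp.weight (wtsrc r s) d = ∑ i : Fin (r + s), d i * ((i : ℕ) + 1) := by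
    rw [Finsupp.weight_apply, Finsupp.sum_fintype]
    · rfl
    · intro i; simp
  rw [h]
  exact IsWeightedHomogeneous.prod Finset.univ _ _
    fun i _ => IsWH_pow R (cartan_hom R r s i) (d i)



def sA : Multiset (MvPolynomial (Fin (r + s)) R) :=
  Finset.univ.val.map fun t : Fin r => X (Fin.castAdd s t)

def sB : Multiset (MvPolynomial (Fin (r + s)) R) :=
  Finset.univ.val.map fun t : Fin s => X (Fin.natAdd r t)

def psi : MvPolynomial (Fin r ⊕ Fin s) R →ₐ[R] MvPolynomial (Fin (r + s)) R :=
  aeval (Sum.elim (fun j : Fin r => (sA R r s).esymm ((j : ℕ) + 1))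
    (fun j : Fin s => (sB R r s).esymm ((j : ℕ) + 1)))

lemma card_sA : Multiset.card (sA R r s) = r := by simp [sA]

lemma card_sB : Multiset.card (sB R r s) = s := by simp [sB]

lemma psi_pOne (k : ℕ) : psi R r s (pOne R r s k) = (sA R r s).esymm k := by
  unfold pOne
  split_ifs with h0 h1
  · subst h0; rw [map_one, esymm_zero']
  · rw [psi, aeval_X, Sum.elim_inl]
    congr 1
    show k - 1 + 1 = k
    omega
  · rw [map_zero, esymm_of_lt]
    rw [card_sA]
    omega

lemma psi_pTwo (k : ℕ) : psi R r s (pTwo R r s k) = (sB R r s).esymm k := by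
  unfold pTwo
  split_ifs with h0 h1
  · subst h0; rw [map_one, esymm_zero']
  · rw [psi, aeval_X, Sum.elim_inr]
    congr 1
    show k - 1 + 1 = k
    omega
  · rw [map_zero, esymm_of_lt]
    rw [card_sB]
    omega

lemma univ_val_map_X :
    Finset.univ.val.map (X : Fin (r + s) → MvPolynomial (Fin (r + s)) R)
      = sA R r s + sB R r s := by
  have h1 : (Finset.univ : Finset (Fin (r + s)))
      = Finset.univ.map finSumFinEquiv.toEmbedding := (Finset.map_univ_equiv _).symm
  rw [h1, Finset.map_val, Multiset.map_map]
  have h2 : (Finset.univ : Finset (Fin r ⊕ Fin s)).val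
      = Multiset.map Sum.inl (Finset.univ : Finset (Fin r)).val
        + Multiset.map Sum.inr (Finset.univ : Finset (Fin s)).val := by
    rw [← Finset.univ_disjSum_univ]; rfl
  rw [h2, Multiset.map_add, Multiset.map_map, Multiset.map_map]
  simp only [sA, sB, Function.comp_def, Equiv.coe_toEmbedding,
    finSumFinEquiv_apply_left, finSumFinEquiv_apply_right]

lemma psi_cartan (i : Fin (r + s)) :
    psi R r s (cartan R r s i) = MvPolynomial.esymm (Fin (r + s)) R ((i : ℕ) + 1) := by
  rw [cartan, map_sum]
  simp_rw [map_mul, psi_pOne, psi_pTwo]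
  rw [← esymm_conv, MvPolynomial.esymm_eq_multiset_esymm]
  congr 1
  exact (univ_val_map_X R r s).symm

def phi : MvPolynomial (Fin (r + s)) R →ₐ[R] MvPolynomial (Fin r ⊕ Fin s) R :=
  aeval (cartan R r s)

lemma phi_injective : Function.Injective (phi R r s) := by
  have hcomp : (psi R r s).comp (phi R r s)
      = (symmetricSubalgebra (Fin (r + s)) R).val.comp (esymmAlgHom (Fin (r + s)) R (r + s)) := by
    apply MvPolynomial.algHom_ext
    intro i
    simp only [AlgHom.comp_apply, phi, aeval_X, psi_cartan]
    show esymm (Fin (r + s)) R ((i : ℕ) + 1)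
      = ((esymmAlgHom (Fin (r + s)) R (r + s)) (X i)).val
    rw [esymmAlgHom_apply, aeval_X]
  intro p q hpq
  have h := congrArg (psi R r s) hpq
  rw [← AlgHom.comp_apply, ← AlgHom.comp_apply, hcomp] at h
  exact esymmAlgHom_fin_injective R le_rfl (Subtype.ext h)

end Stmt16Aux


/-- The ring homomorphism `R[[p_1,…,p_{r+s}]] → R[[p'_1,…,p'_r, p''_1,…,p''_s]]`
determined by the Cartan formula `p_i ↦ p'_i + ∑_{j=1}^{i−1} p'_{i−j} p''_j + p''_i`
(expressed coefficientwise via substitution of the Cartan polynomials) is injective. -/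
theorem stmt16 (R : Type*) [CommRing R] (r s : ℕ)
    (F : MvPowerSeries (Fin (r + s)) R →+* MvPowerSeries (Fin r ⊕ Fin s) R)
    (hF : ∀ (G : MvPowerSeries (Fin (r + s)) R) (e : (Fin r ⊕ Fin s) →₀ ℕ),
      MvPowerSeries.coeff e (F G) =
        ∑ d ∈ Finset.Iic (bnd r s e),
          MvPowerSeries.coeff d G *
            MvPolynomial.coeff e (∏ i : Fin (r + s), cartan R r s i ^ d i)) :
    Function.Injective F := by
  -- reduce to showing the kernel is trivial
  intro G G' hGG'
  suffices h : ∀ H : MvPowerSeries (Fin (r + s)) R, F H = 0 → H = 0 by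
    have h2 := h (G - G') (by rw [map_sub, hGG', sub_self])
    exact sub_eq_zero.mp h2
  intro H hH
  apply MvPowerSeries.ext
  intro d₀
  rw [map_zero]
  set w := Finsupp.weight (Stmt16Aux.wtsrc r s) d₀ with hw
  set bnd' : Fin (r + s) →₀ ℕ := Finsupp.equivFunOnFinite.symm (fun _ => w) with hbnd'
  set D := (Finset.Iic bnd').filter
    (fun d => Finsupp.weight (Stmt16Aux.wtsrc r s) d = w) with hD
  set P : MvPolynomial (Fin (r + s)) R :=
    ∑ d ∈ D, monomial d (MvPowerSeries.coeff d H) with hP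
  have hd₀D : d₀ ∈ D := by
    rw [hD, Finset.mem_filter, Finset.mem_Iic]
    refine ⟨Finsupp.le_def.mpr fun i => ?_, rfl⟩
    have h1 : d₀ i ≤ Finsupp.weight (Stmt16Aux.wtsrc r s) d₀ :=
      Finsupp.le_weight _ (by simp [Stmt16Aux.wtsrc]) d₀
    simpa [hbnd'] using h1
  have hrep : Stmt16Aux.phi R r s P = ∑ d ∈ D,
      C (MvPowerSeries.coeff d H) * ∏ i : Fin (r + s), cartan R r s i ^ d i := by
    rw [hP, map_sum]
    refine Finset.sum_congr rfl fun d _ => ?_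
    rw [Stmt16Aux.phi, aeval_monomial, algebraMap_eq]
    congr 1
    exact Finsupp.prod_fintype _ _ fun i => pow_zero _
  have hφP : Stmt16Aux.phi R r s P = 0 := by
    apply MvPolynomial.ext
    intro e
    rw [hrep, coeff_zero, MvPolynomial.coeff_sum]
    simp_rw [MvPolynomial.coeff_C_mul]
    by_cases he : Finsupp.weight (Stmt16Aux.wt r s) e = w
    · have hbnd_eq : bnd r s e = bnd' := by
        rw [hbnd']
        unfold bnd
        congr 1
        funext x
        rw [show wtCod r s e = Finsupp.weight (Stmt16Aux.wt r s) e from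
          Stmt16Aux.wtCod_eq r s e, he]
      have hFe := hF H e
      rw [hH, map_zero, hbnd_eq] at hFe
      rw [hD, Finset.sum_filter_of_ne]
      · exact hFe.symm
      · intro d _ hne
        by_contra hdw
        apply hne
        rw [(Stmt16Aux.prod_hom R r s d).coeff_eq_zero e
          (fun hc => hdw (hc.symm.trans he)), mul_zero]
    · apply Finset.sum_eq_zero
      intro d hd
      rw [hD, Finset.mem_filter] at hd
      rw [(Stmt16Aux.prod_hom R r s d).coeff_eq_zero e
        (fun hc => he (hc.trans hd.2)), mul_zero]
  have hP0 : P = 0 := Stmt16Aux.phi_injective R r s (by rw [hφP, map_zero])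
  have hc := congrArg (MvPolynomial.coeff d₀) hP0
  rw [hP, MvPolynomial.coeff_sum, coeff_zero, Finset.sum_eq_single d₀
    (fun d _ hne => by rw [MvPolynomial.coeff_monomial, if_neg hne])
    (fun habs => absurd hd₀D habs), MvPolynomial.coeff_monomial, if_pos rfl] at hc
  exact hc

end
end
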